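/- arXiv:1708.08576 — 7 statements merged into one kernel-verified Lean document; each statement's English description precedes it below -/
import Mathlib

section
/- Let p_1 ∈ (0,1), p_0 ∈ (0,1), and let p(l,m) = P(A_{l+1} = m) be the transition probabilities of the backwards branching-like process associated to one cookie of strength p_1 and bias parameter p_0. Then: p(0,0) = p_1; p(0,k) = (1 − p_1)(1 − p_0)^{k−1} p_0 for k ≥ 1; p(1,0) = p_1 p_0; p(1,k) = p_1 (1 − p_0)^k p_0 + k (1 − p_1)(1 − p_0)^{k−1} p_0^2 for k ≥ 1; and for j ≥ 2, p(j,0) = p_1 p_0^j and p(j,k) = C(k+j−1, j−1) p_1 (1 − p_0)^k p_0^j + C(k+j−1, j) (1 − p_1)(1 − p_0)^{k−1} p_0^{j+1} for k ≥ 1, where C(·,·) denotes the binomial coefficient. -/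
open MeasureTheory ProbabilityTheory Filter Topology

open Finset in
lemma bb_card_count (n l : ℕ) :
    (Finset.univ.filter (fun s : Fin n → Bool =>
      (Finset.univ.filter fun j => s j = true).card = l)).card = n.choose l := by
  have h : n.choose l = (Finset.powersetCard l (Finset.univ : Finset (Fin n))).card := by
    rw [Finset.card_powersetCard, Finset.card_univ, Fintype.card_fin]
  rw [h]
  refine Finset.card_bij' (fun s _ => Finset.univ.filter (fun j => s j = true))
    (fun t _ => fun j => decide (j ∈ t)) ?_ ?_ ?_ ?_
  · intro s hs
    simp only [mem_filter, mem_univ, true_and] at hs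
    exact Finset.mem_powersetCard.2 ⟨Finset.filter_subset _ _, hs⟩
  · intro t ht
    rw [Finset.mem_powersetCard] at ht
    simp only [mem_filter, mem_univ, true_and]
    have h2 : Finset.univ.filter (fun j => decide (j ∈ t) = true) = t := by
      ext j; simp
    rw [h2, ht.2]
  · intro s hs
    funext j
    simp
  · intro t ht
    ext j; simp

open Finset in
lemma bb_sum_const_weight (c d : ℝ) (n l : ℕ) :
    (∑ s ∈ Finset.univ.filter (fun s : Fin n → Bool =>
        (Finset.univ.filter fun j => s j = true).card = l),
      ∏ j : Fin n, (if s j then c else d)) = n.choose l * c ^ l * d ^ (n - l) := by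
  have key : ∀ s ∈ Finset.univ.filter (fun s : Fin n → Bool =>
      (Finset.univ.filter fun j => s j = true).card = l),
      (∏ j : Fin n, (if s j then c else d)) = c ^ l * d ^ (n - l) := by
    intro s hs
    simp only [mem_filter, mem_univ, true_and] at hs
    rw [Finset.prod_ite]
    simp only [Finset.prod_const]
    have h2 : (Finset.univ.filter fun j => ¬ (s j = true)).card = n - l := by
      have := Finset.card_filter_add_card_filter_not
        (s := (Finset.univ : Finset (Fin n))) (p := fun j => s j = true)
      simp only [Finset.card_univ, Fintype.card_fin] at this
      omega
    rw [hs, h2]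
  rw [Finset.sum_congr rfl key, Finset.sum_const, bb_card_count, nsmul_eq_mul, mul_assoc]

open Finset in
lemma bb_main_succ (a c : ℝ) (n l : ℕ) :
    (∑ s ∈ Finset.univ.filter (fun s : Fin (n+1) → Bool =>
        (Finset.univ.filter fun j => s j = true).card = l),
      ∏ j : Fin (n+1), (if s j then (if (j:ℕ) = 0 then a else c)
                          else 1 - (if (j:ℕ) = 0 then a else c)))
    = (if l = 0 then 0 else n.choose (l-1) * a * c ^ (l-1) * (1-c) ^ (n-(l-1)))
      + n.choose l * (1-a) * c ^ l * (1-c) ^ (n-l) := by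
  classical
  rw [Finset.sum_filter]
  rw [← Equiv.sum_comp (Fin.consEquiv (fun _ : Fin (n+1) => Bool))]
  rw [Fintype.sum_prod_type]
  rw [Fintype.sum_bool]
  simp only [Fin.consEquiv_apply]
  have hcard : ∀ (b : Bool) (s : Fin n → Bool),
      (Finset.filter (fun j : Fin (n+1) => Fin.cons (α := fun _ => Bool) b s j = true) Finset.univ).card
        = (if b then 1 else 0) + (Finset.filter (fun j => s j = true) Finset.univ).card := by
    intro b s
    rw [Finset.card_filter, Finset.card_filter, Fin.sum_univ_succ]
    simp [Fin.cons_zero, Fin.cons_succ]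
  have hprod : ∀ (b : Bool) (s : Fin n → Bool),
      (∏ j : Fin (n+1), if Fin.cons (α := fun _ => Bool) b s j = true then (if (j:ℕ) = 0 then a else c)
         else 1 - (if (j:ℕ) = 0 then a else c))
        = (if b then a else 1 - a) * ∏ j : Fin n, (if s j then c else 1 - c) := by
    intro b s
    rw [Fin.prod_univ_succ]
    simp [Fin.cons_zero, Fin.cons_succ]
  simp only [hcard, hprod, if_true, if_false, Bool.cond_true]
  have pull : ∀ (r : ℝ) (m : ℕ),
      (∑ s : Fin n → Bool, if (Finset.filter (fun j => s j = true) Finset.univ).card = m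
          then r * ∏ j : Fin n, (if s j then c else 1 - c) else 0)
      = r * ((n.choose m : ℝ) * c ^ m * (1-c) ^ (n-m)) := by
    intro r m
    rw [← Finset.sum_filter, ← Finset.mul_sum, bb_sum_const_weight]
  simp only [Bool.false_eq_true, if_true, if_false, Nat.zero_add]
  rcases l with _ | l'
  · have h1 : (∑ x : Fin n → Bool,
        if 1 + (Finset.filter (fun j => x j = true) Finset.univ).card = 0 then
          a * ∏ j : Fin n, (if x j then c else 1 - c) else 0) = 0 :=
      Finset.sum_eq_zero (fun x _ => by rw [if_neg (by omega)])
    rw [h1, pull]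
    simp
  · rw [if_neg (show ¬(l' + 1 = 0) by omega)]
    simp only [Nat.one_add, Nat.succ_eq_add_one, Nat.add_right_cancel_iff]
    rw [pull, pull]
    simp only [Nat.add_sub_cancel]
    ring

open Finset in
lemma bb_main (a c : ℝ) (n l : ℕ) (hn : n ≠ 0) :
    (∑ s ∈ Finset.univ.filter (fun s : Fin n → Bool =>
        (Finset.univ.filter fun j => s j = true).card = l),
      ∏ j : Fin n, (if s j then (if (j:ℕ) = 0 then a else c)
                          else 1 - (if (j:ℕ) = 0 then a else c)))
    = (if l = 0 then 0 else (n-1).choose (l-1) * a * c ^ (l-1) * (1-c) ^ ((n-1)-(l-1)))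
      + (n-1).choose l * (1-a) * c ^ l * (1-c) ^ ((n-1)-l) := by
  rcases n with _ | n'
  · exact absurd rfl hn
  · rw [bb_main_succ]
    simp only [Nat.add_sub_cancel]


/-- `bbTrans q l m` is the transition probability `p(l,m) = P(A (l+1) = m)` of the
backwards branching-like process: the probability that in a sequence of independent
Bernoulli trials whose `j`-th trial succeeds with probability `q j` (`j` 0-indexed),
there are exactly `m` failures before the `(l+1)`-st success.  Equivalently, among the
first `m + l` trials there are exactly `l` successes and trial `m + l` is a success. -/
noncomputable def bbTrans (q : ℕ → ℝ) (l m : ℕ) : ℝ :=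
  (∑ s ∈ Finset.univ.filter
      (fun s : Fin (m + l) → Bool =>
        (Finset.univ.filter fun j => s j = true).card = l),
    ∏ j : Fin (m + l), (if s j then q (j : ℕ) else 1 - q (j : ℕ)))
    * q (m + l)

/-- **Transition probabilities of the backwards branching-like process** associated to
one cookie of strength `p₁` and bias parameter `p₀` (so the trial success probabilities
are `p₁, p₀, p₀, …`). -/
theorem bb_transition_probabilities_one_cookie
    (p₁ p₀ : ℝ) (hp₁ : p₁ ∈ Set.Ioo (0 : ℝ) 1) (hp₀ : p₀ ∈ Set.Ioo (0 : ℝ) 1) :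
    (bbTrans (fun j => if j = 0 then p₁ else p₀) 0 0 = p₁)
    ∧ (∀ k : ℕ, 1 ≤ k →
        bbTrans (fun j => if j = 0 then p₁ else p₀) 0 k
          = (1 - p₁) * (1 - p₀) ^ (k - 1) * p₀)
    ∧ (bbTrans (fun j => if j = 0 then p₁ else p₀) 1 0 = p₁ * p₀)
    ∧ (∀ k : ℕ, 1 ≤ k →
        bbTrans (fun j => if j = 0 then p₁ else p₀) 1 k
          = p₁ * (1 - p₀) ^ k * p₀ + k * (1 - p₁) * (1 - p₀) ^ (k - 1) * p₀ ^ 2)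
    ∧ (∀ j : ℕ, 2 ≤ j →
        bbTrans (fun i => if i = 0 then p₁ else p₀) j 0 = p₁ * p₀ ^ j)
    ∧ (∀ j : ℕ, 2 ≤ j → ∀ k : ℕ, 1 ≤ k →
        bbTrans (fun i => if i = 0 then p₁ else p₀) j k
          = (k + j - 1).choose (j - 1) * p₁ * (1 - p₀) ^ k * p₀ ^ j
            + (k + j - 1).choose j * (1 - p₁) * (1 - p₀) ^ (k - 1) * p₀ ^ (j + 1)) := by
  refine ⟨?_, ?_, ?_, ?_, ?_, ?_⟩
  · -- (0,0)
    simp [bbTrans]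
  · -- (0,k)
    intro k hk
    simp only [bbTrans]
    rw [bb_main p₁ p₀ (k + 0) 0 (by omega)]
    rw [if_pos rfl, if_neg (show ¬(k + 0 = 0) by omega)]
    simp only [Nat.add_zero, Nat.sub_zero, Nat.choose_zero_right]
    push_cast
    ring
  · -- (1,0)
    simp only [bbTrans]
    rw [bb_main p₁ p₀ (0 + 1) 1 (by omega)]
    norm_num
  · -- (1,k)
    intro k hk
    simp only [bbTrans]
    rw [bb_main p₁ p₀ (k + 1) 1 (by omega)]
    rw [if_neg (show ¬(1 = 0) by omega), if_neg (show ¬(k + 1 = 0) by omega)]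
    simp only [Nat.add_sub_cancel, Nat.sub_zero, Nat.choose_zero_right, Nat.choose_one_right,
      pow_zero, pow_one]
    push_cast [Nat.choose_zero_right, Nat.sub_zero]
    ring
  · -- (j,0)
    intro j hj
    obtain ⟨j', rfl⟩ : ∃ j', j = j' + 2 := ⟨j - 2, by omega⟩
    simp only [bbTrans]
    rw [bb_main p₁ p₀ (0 + (j' + 2)) (j' + 2) (by omega)]
    rw [if_neg (show ¬(j' + 2 = 0) by omega), if_neg (show ¬(0 + (j' + 2) = 0) by omega)]
    simp only [show 0 + (j' + 2) - 1 = j' + 1 from by omega,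
      show j' + 2 - 1 = j' + 1 from by omega, Nat.choose_self, Nat.sub_self, pow_zero,
      Nat.choose_eq_zero_of_lt (show j' + 1 < j' + 2 by omega)]
    push_cast
    ring
  · -- (j,k)
    intro j hj k hk
    obtain ⟨j', rfl⟩ : ∃ j', j = j' + 2 := ⟨j - 2, by omega⟩
    obtain ⟨k', rfl⟩ : ∃ k', k = k' + 1 := ⟨k - 1, by omega⟩
    simp only [bbTrans]
    rw [bb_main p₁ p₀ (k' + 1 + (j' + 2)) (j' + 2) (by omega)]
    rw [if_neg (show ¬(j' + 2 = 0) by omega), if_neg (show ¬(k' + 1 + (j' + 2) = 0) by omega)]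
    simp only [show k' + 1 + (j' + 2) - 1 = k' + j' + 2 from by omega,
      show j' + 2 - 1 = j' + 1 from by omega,
      show k' + 1 - 1 = k' from by omega,
      show k' + j' + 2 - (j' + 1) = k' + 1 from by omega,
      show k' + j' + 2 - (j' + 2) = k' from by omega]
    push_cast
    ring
end

section
/- Let p_1 ∈ (0,1) and p_0 ∈ (1/2,1), and let π be a stationary distribution of the backwards branching-like process associated to one cookie of strength p_1 and bias parameter p_0 satisfying ∑_{k≥0} k π(k) < ∞. Then ∑_{k≥0} k π(k) = (1 − p_1) / (2p_0 − 1). -/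
open MeasureTheory ProbabilityTheory Filter Topology
open scoped ENNReal NNReal

noncomputable def W (q : ℕ → ℝ) (n l : ℕ) : ℝ :=
  ∑ s ∈ Finset.univ.filter
      (fun s : Fin n → Bool =>
        (Finset.univ.filter fun j => s j = true).card = l),
    ∏ j : Fin n, (if s j then q (j : ℕ) else 1 - q (j : ℕ))

lemma count_cons {n : ℕ} (b : Bool) (s : Fin n → Bool) :
    (Finset.univ.filter fun j : Fin (n+1) => (Fin.cons b s : Fin (n+1) → Bool) j = true).card
      = (if b = true then 1 else 0) + (Finset.univ.filter fun j : Fin n => s j = true).card := by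
  rw [Finset.card_filter, Finset.card_filter, Fin.sum_univ_succ]
  simp [Fin.cons_zero, Fin.cons_succ]

lemma prod_cons {n : ℕ} (q : ℕ → ℝ) (b : Bool) (s : Fin n → Bool) :
    (∏ j : Fin (n+1), (if (Fin.cons b s : Fin (n+1) → Bool) j then q (j : ℕ) else 1 - q (j : ℕ)))
      = (if b then q 0 else 1 - q 0)
        * ∏ j : Fin n, (if s j then q ((j : ℕ)+1) else 1 - q ((j : ℕ)+1)) := by
  rw [Fin.prod_univ_succ]
  simp [Fin.cons_zero, Fin.cons_succ, Fin.val_succ]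

lemma W_succ_split (q : ℕ → ℝ) (n l : ℕ) :
    W q (n+1) l
      = (∑ s : Fin n → Bool,
          if (if true then 1 else 0) + (Finset.univ.filter fun j : Fin n => s j = true).card = l
          then q 0 * ∏ j : Fin n, (if s j then q ((j : ℕ)+1) else 1 - q ((j : ℕ)+1)) else 0)
        + (∑ s : Fin n → Bool,
          if (Finset.univ.filter fun j : Fin n => s j = true).card = l
          then (1 - q 0) * ∏ j : Fin n, (if s j then q ((j : ℕ)+1) else 1 - q ((j : ℕ)+1)) else 0) := by
  classical
  unfold W
  rw [Finset.sum_filter, ← (Fin.consEquiv (fun _ : Fin (n+1) => Bool)).sum_comp,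
    Fintype.sum_prod_type, Fintype.sum_bool]
  congr 1
  · refine Finset.sum_congr rfl fun s _ => ?_
    rw [show (Fin.consEquiv (fun _ : Fin (n+1) => Bool)) (true, s) = Fin.cons true s from rfl,
      count_cons, prod_cons]
    simp
  · refine Finset.sum_congr rfl fun s _ => ?_
    rw [show (Fin.consEquiv (fun _ : Fin (n+1) => Bool)) (false, s) = Fin.cons false s from rfl,
      count_cons, prod_cons]
    simp

lemma W_succ_succ (q : ℕ → ℝ) (n k : ℕ) :
    W q (n+1) (k+1)
      = q 0 * W (fun j => q (j+1)) n k + (1 - q 0) * W (fun j => q (j+1)) n (k+1) := by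
  rw [W_succ_split]
  unfold W
  rw [Finset.mul_sum, Finset.mul_sum, Finset.sum_filter, Finset.sum_filter]
  congr 1
  refine Finset.sum_congr rfl fun s _ => ?_
  refine if_congr ?_ rfl rfl
  constructor <;> intro h <;> simp at h ⊢ <;> omega

lemma W_succ_zero (q : ℕ → ℝ) (n : ℕ) :
    W q (n+1) 0 = (1 - q 0) * W (fun j => q (j+1)) n 0 := by
  rw [W_succ_split]
  unfold W
  rw [Finset.mul_sum, Finset.sum_filter]
  have : (∑ s : Fin n → Bool,
      if (if true then 1 else 0) + (Finset.univ.filter fun j : Fin n => s j = true).card = 0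
      then q 0 * ∏ j : Fin n, (if s j then q ((j : ℕ)+1) else 1 - q ((j : ℕ)+1)) else 0) = 0 := by
    refine Finset.sum_eq_zero fun s _ => ?_
    simp
  rw [this, zero_add]

lemma W_zero (q : ℕ → ℝ) (l : ℕ) : W q 0 l = if l = 0 then 1 else 0 := by
  unfold W
  rcases l with _ | l
  · rw [if_pos rfl]
    have : (Finset.univ.filter fun s : Fin 0 → Bool =>
        (Finset.univ.filter fun j => s j = true).card = 0) = Finset.univ := by
      apply Finset.filter_true_of_mem; intro s _; simp
    rw [this]
    simp
  · rw [if_neg (by omega)]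
    apply Finset.sum_eq_zero
    intro s hs
    simp only [Finset.mem_filter] at hs
    exfalso
    have := hs.2
    simp at this

lemma W_const (c : ℝ) (n : ℕ) : ∀ l, W (fun _ => c) n l = (n.choose l : ℝ) * c^l * (1-c)^(n-l) := by
  induction n with
  | zero =>
    intro l
    rw [W_zero]
    rcases l with _ | l <;> simp
  | succ n ih =>
    rintro (_ | k)
    · rw [W_succ_zero, ih 0]
      simp [pow_succ]
      ring
    · rw [W_succ_succ, ih k, ih (k+1)]
      rcases le_or_gt (k+1) n with h | h
      · have h1 : n - k = (n - (k+1)) + 1 := by omega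
        rw [Nat.choose_succ_succ, h1]
        have h2 : n + 1 - (k+1) = n - k := by omega
        rw [h2, h1]
        push_cast
        ring
      · have h2 : n.choose (k+1) = 0 := Nat.choose_eq_zero_of_lt h
        rcases le_or_gt (k+1) (n+1) with h3 | h3
        · have : k = n := by omega
          subst this
          simp [Nat.choose_succ_self_right, Nat.choose_self]
          ring
        · have h4 : n.choose k = 0 := Nat.choose_eq_zero_of_lt (by omega)
          have h5 : (n+1).choose (k+1) = 0 := Nat.choose_eq_zero_of_lt h3
          simp [h2, h4, h5]
def ck (p₁ p₀ : ℝ) : ℕ → ℝ := fun j => if j = 0 then p₁ else p₀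

section Cookie

variable (p₁ p₀ : ℝ)

local notation "q" => ck p₁ p₀

lemma q_shift : (fun j => ck p₁ p₀ (j + 1)) = fun _ => p₀ := by
  funext j; simp [ck]

lemma bbTrans_eq_W (l m : ℕ) : bbTrans q l m = W q (m + l) l * ck p₁ p₀ (m + l) :=
  rfl

lemma bbTrans_zero (l : ℕ) : bbTrans q l 0 = p₁ * p₀ ^ l := by
  rcases l with _ | k
  · rw [bbTrans_eq_W, W_zero]
    simp [ck]
  · rw [bbTrans_eq_W]
    have h0 : (0 + (k+1)) = k + 1 := by omega
    rw [h0, W_succ_succ, q_shift, W_const, W_const]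
    simp [Nat.choose_eq_zero_of_lt (Nat.lt_succ_self k), pow_succ, ck]
    ring

lemma bbTrans_succ (l m : ℕ) :
    bbTrans q l (m+1)
      = p₁ * ((m+l).choose (m+1) : ℝ) * p₀ ^ l * (1-p₀) ^ (m+1)
        + (1-p₁) * ((m+l).choose m : ℝ) * p₀ ^ (l+1) * (1-p₀) ^ m := by
  rcases l with _ | k
  · rw [bbTrans_eq_W]
    have h0 : (m + 1 + 0) = m + 1 := by omega
    rw [h0, W_succ_zero, q_shift, W_const]
    simp [Nat.choose_eq_zero_of_lt (Nat.lt_succ_self m), pow_succ, ck]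
    ring
  · rw [bbTrans_eq_W]
    have h0 : (m + 1 + (k+1)) = (m + k + 1) + 1 := by omega
    rw [h0, W_succ_succ, q_shift, W_const, W_const]
    have e1 : m + k + 1 - k = m + 1 := by omega
    have e2 : m + k + 1 - (k+1) = m := by omega
    have c1 : (m + (k+1)).choose (m+1) = (m+k+1).choose k := by
      rw [show m + (k+1) = m + k + 1 by omega]
      rw [← Nat.choose_symm (show m+1 ≤ m+k+1 by omega), show m+k+1-(m+1) = k by omega]
    have c2 : (m + (k+1)).choose m = (m+k+1).choose (k+1) := by
      rw [show m + (k+1) = m + k + 1 by omega]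
      rw [← Nat.choose_symm (show m ≤ m+k+1 by omega), show m+k+1-m = k+1 by omega]
    rw [e1, e2, c1, c2]
    simp [ck]
    ring

lemma bbTrans_nonneg (Q : ℕ → ℝ) (h0 : ∀ j, 0 ≤ Q j) (h1 : ∀ j, Q j ≤ 1) (l m : ℕ) :
    0 ≤ bbTrans Q l m := by
  unfold bbTrans
  apply mul_nonneg _ (h0 _)
  apply Finset.sum_nonneg
  intro s _
  apply Finset.prod_nonneg
  intro j _
  split_ifs
  · exact h0 _
  · linarith [h1 (j : ℕ)]

variable (hp0 : 0 < p₀) (hp01 : p₀ < 1)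
include hp0 hp01

lemma hr_norm : ‖(1 - p₀ : ℝ)‖ < 1 := by
  rw [Real.norm_eq_abs, abs_of_nonneg (by linarith)]
  linarith

lemma hasSum_A (a : ℕ) :
    HasSum (fun m : ℕ => ((m + a).choose a : ℝ) * (1 - p₀) ^ m) (1 / p₀ ^ (a + 1)) := by
  have := hasSum_choose_mul_geometric_of_norm_lt_one (𝕜 := ℝ) a (hr_norm p₀ hp0 hp01)
  rwa [show (1 : ℝ) - (1 - p₀) = p₀ by ring] at this

lemma hasSum_B (a : ℕ) :
    HasSum (fun m : ℕ => ((m + a).choose (a + 1) : ℝ) * (1 - p₀) ^ m)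
      ((1 - p₀) / p₀ ^ (a + 2)) := by
  have hg : HasSum (fun m : ℕ => ((m + 1 + a).choose (a + 1) : ℝ) * (1 - p₀) ^ (m + 1))
      ((1 - p₀) * (1 / p₀ ^ (a + 2))) := by
    have h := (hasSum_A p₀ hp0 hp01 (a + 1)).mul_left (1 - p₀)
    refine h.congr_fun fun m => ?_
    rw [show m + 1 + a = m + (a + 1) by omega]
    ring
  have h2 := (hasSum_nat_add_iff
      (f := fun m : ℕ => ((m + a).choose (a + 1) : ℝ) * (1 - p₀) ^ m) 1).mp hg
  have h3 : ∑ i ∈ Finset.range 1, ((i + a).choose (a + 1) : ℝ) * (1 - p₀) ^ i = 0 := by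
    simp [Nat.choose_eq_zero_of_lt (Nat.lt_succ_self a)]
  rw [h3, add_zero] at h2
  convert h2 using 1
  · rfl
  ring

lemma hasSum_mul_bbTrans (l : ℕ) :
    HasSum (fun m : ℕ => (m : ℝ) * bbTrans (ck p₁ p₀) l m)
      (p₁ * p₀ ^ l * ((l : ℝ) * (1 - p₀) / p₀ ^ (l + 1))
        + (1 - p₁) * p₀ ^ (l + 1)
          * (((l : ℝ) + 1) * (1 - p₀) / p₀ ^ (l + 2) + 1 / p₀ ^ (l + 1))) := by
  have hp0' : (p₀ : ℝ) ≠ 0 := ne_of_gt hp0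
  -- first piece
  have h1 : HasSum
      (fun m : ℕ => ((m : ℝ) + 1) * (p₁ * ((m + l).choose (m + 1) : ℝ) * p₀ ^ l * (1 - p₀) ^ (m + 1)))
      (p₁ * p₀ ^ l * ((l : ℝ) * (1 - p₀) / p₀ ^ (l + 1))) := by
    rcases l with _ | k
    · have : (fun m : ℕ => ((m : ℝ) + 1)
          * (p₁ * ((m + 0).choose (m + 1) : ℝ) * p₀ ^ 0 * (1 - p₀) ^ (m + 1))) = fun _ => 0 := by
        funext m
        simp [Nat.choose_eq_zero_of_lt (Nat.lt_succ_self m)]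
      rw [this]
      simpa using hasSum_zero
    · have hfun : (fun m : ℕ => ((m : ℝ) + 1)
          * (p₁ * ((m + (k + 1)).choose (m + 1) : ℝ) * p₀ ^ (k + 1) * (1 - p₀) ^ (m + 1)))
          = fun m : ℕ => p₁ * p₀ ^ (k + 1) * ((k : ℝ) + 1) * (1 - p₀)
              * (((m + (k + 1)).choose (k + 1) : ℝ) * (1 - p₀) ^ m) := by
        funext m
        have key : ((m + (k + 1)).choose (k + 1) : ℕ) * (k + 1)
            = (m + (k + 1)).choose (m + 1) * (m + 1) := by
          have e1 := Nat.choose_succ_right_eq (m + k + 1) k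
          have e2 : (m + k + 1).choose (m + 1) = (m + k + 1).choose k := by
            rw [← Nat.choose_symm (show m + 1 ≤ m + k + 1 by omega),
              show m + k + 1 - (m + 1) = k by omega]
          rw [show m + (k + 1) = m + k + 1 by omega, e2]
          rw [show m + k + 1 - k = m + 1 by omega] at e1
          exact e1
        have keyR : (((m + (k + 1)).choose (k + 1) : ℝ)) * ((k : ℝ) + 1)
            = ((m + (k + 1)).choose (m + 1) : ℝ) * ((m : ℝ) + 1) := by
          exact_mod_cast congrArg (Nat.cast : ℕ → ℝ) key
        calc ((m : ℝ) + 1) * (p₁ * ((m + (k + 1)).choose (m + 1) : ℝ) * p₀ ^ (k + 1) * (1 - p₀) ^ (m + 1))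
            = (((m + (k + 1)).choose (m + 1) : ℝ) * ((m : ℝ) + 1))
              * (p₁ * p₀ ^ (k + 1) * (1 - p₀) ^ (m + 1)) := by ring
          _ = ((((m + (k + 1)).choose (k + 1) : ℝ)) * ((k : ℝ) + 1))
              * (p₁ * p₀ ^ (k + 1) * (1 - p₀) ^ (m + 1)) := by rw [keyR]
          _ = p₁ * p₀ ^ (k + 1) * ((k : ℝ) + 1) * (1 - p₀)
              * (((m + (k + 1)).choose (k + 1) : ℝ) * (1 - p₀) ^ m) := by ring
      rw [hfun]
      have h := (hasSum_A p₀ hp0 hp01 (k + 1)).mul_left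
        (p₁ * p₀ ^ (k + 1) * ((k : ℝ) + 1) * (1 - p₀))
      convert h using 1
      · rfl
      push_cast
      field_simp
  -- second piece
  have h2 : HasSum
      (fun m : ℕ => ((m : ℝ) + 1)
        * ((1 - p₁) * ((m + l).choose m : ℝ) * p₀ ^ (l + 1) * (1 - p₀) ^ m))
      ((1 - p₁) * p₀ ^ (l + 1)
        * (((l : ℝ) + 1) * (1 - p₀) / p₀ ^ (l + 2) + 1 / p₀ ^ (l + 1))) := by
    have hfun : (fun m : ℕ => ((m : ℝ) + 1)
        * ((1 - p₁) * ((m + l).choose m : ℝ) * p₀ ^ (l + 1) * (1 - p₀) ^ m))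
        = fun m : ℕ => (1 - p₁) * p₀ ^ (l + 1)
            * (((l : ℝ) + 1) * (((m + l).choose (l + 1) : ℝ) * (1 - p₀) ^ m)
              + ((m + l).choose l : ℝ) * (1 - p₀) ^ m) := by
      funext m
      have e1 := Nat.choose_succ_right_eq (m + l) l
      rw [show m + l - l = m by omega] at e1
      have e2 : (m + l).choose m = (m + l).choose l := by
        rw [← Nat.choose_symm (show m ≤ m + l by omega), show m + l - m = l by omega]
      have e1R : ((m + l).choose (l + 1) : ℝ) * ((l : ℝ) + 1)
          = ((m + l).choose l : ℝ) * (m : ℝ) := by exact_mod_cast e1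
      have e2R : ((m + l).choose m : ℝ) = ((m + l).choose l : ℝ) := by exact_mod_cast e2
      rw [e2R]
      linear_combination (-((1 - p₁) * p₀ ^ (l + 1) * (1 - p₀) ^ m)) * e1R
    rw [hfun]
    have h := (((hasSum_B p₀ hp0 hp01 l).mul_left ((l : ℝ) + 1)).add
      (hasSum_A p₀ hp0 hp01 l)).mul_left ((1 - p₁) * p₀ ^ (l + 1))
    convert h using 1
    · rfl
    ring
  -- assemble
  have hg := h1.add h2
  have hg' : HasSum (fun m : ℕ => (((m + 1 : ℕ) : ℝ)) * bbTrans (ck p₁ p₀) l (m + 1))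
      (p₁ * p₀ ^ l * ((l : ℝ) * (1 - p₀) / p₀ ^ (l + 1))
        + (1 - p₁) * p₀ ^ (l + 1)
          * (((l : ℝ) + 1) * (1 - p₀) / p₀ ^ (l + 2) + 1 / p₀ ^ (l + 1))) := by
    refine hg.congr_fun fun m => ?_
    rw [bbTrans_succ]
    push_cast
    ring
  have h3 := (hasSum_nat_add_iff (f := fun m : ℕ => (m : ℝ) * bbTrans (ck p₁ p₀) l m) 1).mp hg'
  simpa using h3

lemma hasSum_mul_bbTrans' (l : ℕ) :
    HasSum (fun m : ℕ => (m : ℝ) * bbTrans (ck p₁ p₀) l m)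
      ((l : ℝ) * (1 - p₀) / p₀ + (1 - p₁) / p₀) := by
  have h := hasSum_mul_bbTrans p₁ p₀ hp0 hp01 l
  convert h using 1
  have hp0' : (p₀ : ℝ) ≠ 0 := ne_of_gt hp0
  field_simp
  ring

end Cookie

/-- `IsStationaryDist q π` : `π` is a stationary distribution of the backwards
branching-like process with transition probabilities `bbTrans q`: a probability mass
function on `ℕ` with `π m = ∑' l, π l * p(l,m)` for all `m`. -/
def IsStationaryDist (q : ℕ → ℝ) (π : ℕ → ℝ) : Prop :=
  (∀ k, 0 ≤ π k) ∧ (∑' k, π k) = 1 ∧ ∀ m, π m = ∑' l, π l * bbTrans q l m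

/-- **Mean of the stationary distribution for one cookie.**
If `π` is a stationary distribution of the backwards branching-like process associated
to one cookie of strength `p₁ ∈ (0,1)` and bias parameter `p₀ ∈ (1/2,1)`, with finite
mean, then `∑' k, k * π k = (1 - p₁) / (2 p₀ - 1)`. -/
theorem stationary_mean_one_cookie
    (p₁ p₀ : ℝ) (hp₁ : p₁ ∈ Set.Ioo (0 : ℝ) 1) (hp₀ : p₀ ∈ Set.Ioo (1 / 2 : ℝ) 1)
    (π : ℕ → ℝ) (hπ : IsStationaryDist (fun j => if j = 0 then p₁ else p₀) π)
    (hsum : Summable fun k : ℕ => (k : ℝ) * π k) :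
    (∑' k : ℕ, (k : ℝ) * π k) = (1 - p₁) / (2 * p₀ - 1) := by
  obtain ⟨hπ0, hπ1, hπstat⟩ := hπ
  obtain ⟨hp₁0, hp₁1⟩ := hp₁
  obtain ⟨hp₀half, hp₀1⟩ := hp₀
  have hp0 : 0 < p₀ := by linarith
  have hp0' : (p₀ : ℝ) ≠ 0 := ne_of_gt hp0
  have hQ : (fun j => if j = 0 then p₁ else p₀) = ck p₁ p₀ := rfl
  rw [hQ] at hπstat
  set μ := ∑' k : ℕ, (k : ℝ) * π k with hμ
  have hπsummable : Summable π := by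
    by_contra h
    rw [tsum_eq_zero_of_not_summable h] at hπ1
    exact one_ne_zero hπ1.symm
  have hbnn : ∀ l m, 0 ≤ bbTrans (ck p₁ p₀) l m := fun l m =>
    bbTrans_nonneg _ (fun j => by unfold ck; split_ifs <;> linarith)
      (fun j => by unfold ck; split_ifs <;> linarith) l m
  have hrow : ∀ l, HasSum (fun m : ℕ => (m : ℝ) * (π l * bbTrans (ck p₁ p₀) l m))
      (π l * ((l : ℝ) * (1 - p₀) / p₀ + (1 - p₁) / p₀)) := fun l => by
    have h := (hasSum_mul_bbTrans' p₁ p₀ hp0 hp₀1 l).mul_left (π l)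
    exact h.congr_fun fun m => by ring
  set F : ℕ × ℕ → ℝ :=
    fun p => ((p.2 : ℝ)) * (π p.1 * bbTrans (ck p₁ p₀) p.1 p.2) with hF
  have hFnn : 0 ≤ F := fun p =>
    mul_nonneg (Nat.cast_nonneg _) (mul_nonneg (hπ0 _) (hbnn _ _))
  have hEsummable : Summable (fun l : ℕ => π l * ((l : ℝ) * (1 - p₀) / p₀ + (1 - p₁) / p₀)) := by
    have hs1 : Summable (fun l : ℕ => ((1 - p₀) / p₀) * ((l : ℝ) * π l)) := hsum.mul_left _
    have hs2 : Summable (fun l : ℕ => ((1 - p₁) / p₀) * π l) := hπsummable.mul_left _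
    exact (hs1.add hs2).congr fun l => by ring
  have hFsummable : Summable F := by
    rw [summable_prod_of_nonneg hFnn]
    refine ⟨fun l => (hrow l).summable, ?_⟩
    have he : (fun l => ∑' m, F (l, m))
        = fun l => π l * ((l : ℝ) * (1 - p₀) / p₀ + (1 - p₁) / p₀) :=
      funext fun l => (hrow l).tsum_eq
    rw [he]
    exact hEsummable
  have hexch : μ = ∑' l, π l * ((l : ℝ) * (1 - p₀) / p₀ + (1 - p₁) / p₀) := by
    have step1 : μ = ∑' m : ℕ, ((m : ℝ) * ∑' l, π l * bbTrans (ck p₁ p₀) l m) :=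
      tsum_congr fun m => by rw [← hπstat m]
    rw [step1]
    have step2 : ∀ m : ℕ, (m : ℝ) * (∑' l, π l * bbTrans (ck p₁ p₀) l m)
        = ∑' l, F (l, m) := fun m => tsum_mul_left.symm
    calc ∑' m : ℕ, ((m : ℝ) * ∑' l, π l * bbTrans (ck p₁ p₀) l m)
        = ∑' (m : ℕ) (l : ℕ), F (l, m) := tsum_congr step2
      _ = ∑' (l : ℕ) (m : ℕ), F (l, m) := Summable.tsum_comm hFsummable
      _ = ∑' l, π l * ((l : ℝ) * (1 - p₀) / p₀ + (1 - p₁) / p₀) :=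
          tsum_congr fun l => (hrow l).tsum_eq
  have hlin : μ = (1 - p₀) / p₀ * μ + (1 - p₁) / p₀ := by
    have he : (fun l : ℕ => π l * ((l : ℝ) * (1 - p₀) / p₀ + (1 - p₁) / p₀))
        = fun l : ℕ => ((1 - p₀) / p₀) * ((l : ℝ) * π l) + ((1 - p₁) / p₀) * π l :=
      funext fun l => by ring
    have hr : (∑' l, π l * ((l : ℝ) * (1 - p₀) / p₀ + (1 - p₁) / p₀))
        = (1 - p₀) / p₀ * μ + (1 - p₁) / p₀ := by
      rw [he, Summable.tsum_add (hsum.mul_left _) (hπsummable.mul_left _), tsum_mul_left, tsum_mul_left,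
        hπ1, mul_one]
    exact hexch.trans hr
  have h2p : (2 * p₀ - 1 : ℝ) ≠ 0 := by intro h; nlinarith [h]
  show μ = (1 - p₁) / (2 * p₀ - 1)
  rw [eq_div_iff h2p]
  field_simp at hlin
  linarith
end

section
/- Let q ∈ (1/2, 1), M ≥ 1, and let p ∈ (0,1)^M satisfy p_i ≤ q for all 1 ≤ i ≤ M. Let (Y_n)_{n≥0} be the standard excited random walk with M cookies and cookie strength vector p. Then almost surely limsup_{n→∞} Y_n / n ≤ 2q − 1. -/
open MeasureTheory ProbabilityTheory Filter Topology
open scoped ENNReal NNReal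

/-- The success probability of the `j+1`-st visit to a site: `p (j+1)` while cookies
remain (`j < M`), and the bias parameter `p₀` afterwards. -/
noncomputable def cookieSeq (M : ℕ) (p : Fin M → ℝ) (p₀ : ℝ) (j : ℕ) : ℝ :=
  if h : j < M then p ⟨j, h⟩ else p₀

/-- `IsEARW P M p p₀ X` : under the probability measure `P`, the process `X` is an
excited asymmetric random walk with `M` cookies of strengths `p ∈ (0,1)^M` and bias
parameter `p₀`: it starts at `0`, moves by `±1` steps, and conditionally on the path
`(X 0, …, X n)` it steps right with probability `p i` on the event
`#{m ≤ n : X m = X n} = i` for `1 ≤ i ≤ M`, and with probability `p₀` on the event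
`#{m ≤ n : X m = X n} > M`. -/
structure IsEARW {Ω : Type*} [MeasurableSpace Ω] (P : Measure Ω)
    (M : ℕ) (p : Fin M → ℝ) (p₀ : ℝ) (X : ℕ → Ω → ℤ) : Prop where
  measurable : ∀ n, Measurable (X n)
  init : ∀ ω, X 0 ω = 0
  steps : ∀ ω n, |X (n + 1) ω - X n ω| = 1
  cond : ∀ (n : ℕ) (w : Fin (n + 1) → ℤ),
    P ({ω | X (n + 1) ω = w (Fin.last n) + 1} ∩ {ω | ∀ m : Fin (n + 1), X m ω = w m})
      = ENNReal.ofReal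
          (cookieSeq M p p₀
            ((Finset.univ.filter fun m : Fin (n + 1) => w m = w (Fin.last n)).card - 1))
        * P {ω | ∀ m : Fin (n + 1), X m ω = w m}



lemma exp_le_one_add_sq {x : ℝ} (hx : |x| ≤ 1) : Real.exp x ≤ 1 + x + x ^ 2 := by
  have h := Real.exp_bound hx (by norm_num : 0 < 3)
  have hsum : ∑ m ∈ Finset.range 3, x ^ m / m.factorial = 1 + x + x ^ 2 / 2 := by
    norm_num [Finset.sum_range_succ, Nat.factorial]
  rw [hsum] at h
  have h2 : Real.exp x - (1 + x + x ^ 2 / 2) ≤ |x| ^ 3 * (2 / 9) := by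
    refine (abs_sub_le_iff.mp h).1.trans (le_of_eq ?_)
    norm_num [Nat.factorial]
  have h3 : |x| ^ 3 ≤ x ^ 2 := by
    have : |x| ^ 3 ≤ |x| ^ 2 := pow_le_pow_of_le_one (abs_nonneg x) hx (by norm_num)
    simpa [sq_abs] using this
  nlinarith [sq_nonneg x]

lemma core_est {q eps : ℝ} (hq12 : 1 / 2 < q) (hq1 : q < 1) (he : 0 < eps) (he1 : eps ≤ 1) :
    Real.exp (-(eps / 2 * (2 * q - 1 + eps))) *
      (q * Real.exp (eps / 2) + (1 - q) * Real.exp (-(eps / 2)))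
      ≤ Real.exp (-(eps ^ 2 / 4)) := by
  set l : ℝ := eps / 2 with hl
  have hl0 : 0 < l := by positivity
  have hl1 : l ≤ 1 := by rw [hl]; linarith
  have h1 : Real.exp l ≤ 1 + l + l ^ 2 := exp_le_one_add_sq (by rw [abs_of_nonneg hl0.le]; exact hl1)
  have h2 : Real.exp (-l) ≤ 1 + (-l) + (-l) ^ 2 := exp_le_one_add_sq (by rw [abs_neg, abs_of_nonneg hl0.le]; exact hl1)
  have hq0 : 0 ≤ q := by linarith
  have hq1' : 0 ≤ 1 - q := by linarith
  have hstep : q * Real.exp l + (1 - q) * Real.exp (-l)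
      ≤ 1 + (2 * q - 1) * l + l ^ 2 := by nlinarith
  have hexp : 1 + (2 * q - 1) * l + l ^ 2 ≤ Real.exp ((2 * q - 1) * l + l ^ 2) := by
    have := Real.add_one_le_exp ((2 * q - 1) * l + l ^ 2)
    linarith
  have hnn : 0 ≤ q * Real.exp l + (1 - q) * Real.exp (-l) := by
    have := Real.exp_pos l; have := Real.exp_pos (-l); nlinarith
  calc Real.exp (-(l * (2 * q - 1 + eps))) * (q * Real.exp l + (1 - q) * Real.exp (-l))
      ≤ Real.exp (-(l * (2 * q - 1 + eps))) * Real.exp ((2 * q - 1) * l + l ^ 2) :=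
        mul_le_mul_of_nonneg_left (hstep.trans hexp) (Real.exp_pos _).le
    _ = Real.exp (-(l * (2 * q - 1 + eps)) + ((2 * q - 1) * l + l ^ 2)) := (Real.exp_add _ _).symm
    _ ≤ Real.exp (-(eps ^ 2 / 4)) := by
        apply Real.exp_le_exp.mpr
        have : l = eps / 2 := hl
        nlinarith

lemma cookieSeq_nonneg {M : ℕ} {p : Fin M → ℝ} (hp : ∀ i, p i ∈ Set.Ioo (0 : ℝ) 1) (j : ℕ) :
    0 ≤ cookieSeq M p (1 / 2) j := by
  unfold cookieSeq
  split
  · exact (hp _).1.le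
  · norm_num

lemma cookieSeq_le {M : ℕ} {p : Fin M → ℝ} {q : ℝ} (hq : 1 / 2 ≤ q)
    (hpq : ∀ i, p i ≤ q) (j : ℕ) : cookieSeq M p (1 / 2) j ≤ q := by
  unfold cookieSeq
  split
  · exact hpq _
  · exact hq

lemma step_bound {Ω : Type*} [MeasurableSpace Ω] (P : Measure Ω) [IsProbabilityMeasure P]
    {q : ℝ} (hq : q ∈ Set.Ioo (1 / 2 : ℝ) 1)
    {M : ℕ} {p : Fin M → ℝ} (hp : ∀ i, p i ∈ Set.Ioo (0 : ℝ) 1) (hpq : ∀ i, p i ≤ q)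
    {Y : ℕ → Ω → ℤ} (hY : IsEARW P M p (1 / 2) Y)
    {l : ℝ} (hl : 0 ≤ l) (n : ℕ) :
    ∫⁻ ω, ENNReal.ofReal (Real.exp (l * (Y (n + 1) ω : ℝ))) ∂P
      ≤ ENNReal.ofReal (q * Real.exp l + (1 - q) * Real.exp (-l)) *
        ∫⁻ ω, ENNReal.ofReal (Real.exp (l * (Y n ω : ℝ))) ∂P := by
  have hq0 : (0 : ℝ) < q := lt_trans (by norm_num) hq.1
  have hc0 : 0 ≤ q * Real.exp l + (1 - q) * Real.exp (-l) := by
    have := Real.exp_pos l; have := Real.exp_pos (-l); have := hq.2; nlinarith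
  set A : (Fin (n + 1) → ℤ) → Set Ω := fun w => {ω | ∀ m : Fin (n + 1), Y m ω = w m} with hA
  have hAmeas : ∀ w, MeasurableSet (A w) := by
    intro w
    have : A w = ⋂ m : Fin (n + 1), Y m ⁻¹' {w m} := by
      ext ω; simp [hA, Set.mem_iInter]
    rw [this]
    exact MeasurableSet.iInter fun m => (hY.measurable m) (measurableSet_singleton _)
  have hdisj : Pairwise (Function.onFun Disjoint A) := by
    intro w w' hne
    rw [Function.onFun, Set.disjoint_left]
    intro ω h1 h2
    exact hne (funext fun m => (h1 m).symm.trans (h2 m))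
  have hcover : ⋃ w, A w = Set.univ := by
    ext ω; simp only [Set.mem_iUnion, Set.mem_univ, iff_true]
    exact ⟨fun m => Y m ω, fun m => rfl⟩
  have hdecomp : ∀ f : Ω → ℝ≥0∞, ∫⁻ ω, f ω ∂P = ∑' w, ∫⁻ ω in A w, f ω ∂P := by
    intro f
    rw [← setLIntegral_univ, ← hcover, lintegral_iUnion hAmeas hdisj]
  have hwl : ∀ (w : Fin (n + 1) → ℤ) (ω : Ω), ω ∈ A w → Y n ω = w (Fin.last n) := by
    intro w ω hω
    have := hω (Fin.last n)
    simpa [Fin.val_last] using this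
  have key_g : ∀ w, ∫⁻ ω in A w, ENNReal.ofReal (Real.exp (l * (Y n ω : ℝ))) ∂P
      = ENNReal.ofReal (Real.exp (l * (w (Fin.last n) : ℝ))) * P (A w) := by
    intro w
    rw [setLIntegral_congr_fun (hAmeas w)
      ((fun ω hω => by rw [hwl w ω hω] :
        ∀ ω, ω ∈ A w → ENNReal.ofReal (Real.exp (l * (Y n ω : ℝ)))
          = ENNReal.ofReal (Real.exp (l * (w (Fin.last n) : ℝ))))),
      setLIntegral_const]
  have key_g' : ∀ w, ∫⁻ ω in A w, ENNReal.ofReal (Real.exp (l * (Y (n + 1) ω : ℝ))) ∂P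
      ≤ ENNReal.ofReal (q * Real.exp l + (1 - q) * Real.exp (-l)) *
        (ENNReal.ofReal (Real.exp (l * (w (Fin.last n) : ℝ))) * P (A w)) := by
    intro w
    set cw : ℝ := cookieSeq M p (1 / 2)
        ((Finset.univ.filter fun m : Fin (n + 1) => w m = w (Fin.last n)).card - 1) with hcwdef
    have hcw0 : 0 ≤ cw := cookieSeq_nonneg hp _
    have hcwq : cw ≤ q := cookieSeq_le hq.1.le hpq _
    have hcw1 : cw ≤ 1 := hcwq.trans hq.2.le
    have hB : MeasurableSet {ω | Y (n + 1) ω = w (Fin.last n) + 1} :=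
      (hY.measurable (n + 1)) (measurableSet_singleton _)
    have hC : MeasurableSet {ω | Y (n + 1) ω = w (Fin.last n) - 1} :=
      (hY.measurable (n + 1)) (measurableSet_singleton _)
    set B : Set Ω := {ω | Y (n + 1) ω = w (Fin.last n) + 1} ∩ A w with hBdef
    set C : Set Ω := {ω | Y (n + 1) ω = w (Fin.last n) - 1} ∩ A w with hCdef
    have hBmeas : MeasurableSet B := hB.inter (hAmeas w)
    have hCmeas : MeasurableSet C := hC.inter (hAmeas w)
    have hsplit : A w = B ∪ C := by
      ext ω
      constructor
      · intro hω
        have h1 := hY.steps ω n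
        have h2 : Y n ω = w (Fin.last n) := hwl w ω hω
        rcases (abs_eq (by norm_num : (0 : ℤ) ≤ 1)).mp h1 with h | h
        · exact Or.inl ⟨show Y (n + 1) ω = w (Fin.last n) + 1 by omega, hω⟩
        · exact Or.inr ⟨show Y (n + 1) ω = w (Fin.last n) - 1 by omega, hω⟩
      · rintro (⟨_, hω⟩ | ⟨_, hω⟩) <;> exact hω
    have hBC : Disjoint B C := by
      rw [Set.disjoint_left]
      rintro ω ⟨h1, -⟩ ⟨h2, -⟩
      simp only [Set.mem_setOf_eq] at h1 h2
      omega
    have hBsub : B ⊆ A w := Set.inter_subset_right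
    have hPB : P B = ENNReal.ofReal cw * P (A w) := hY.cond n w
    have hCeq : C = A w \ B := by
      ext ω
      constructor
      · rintro ⟨h1, h2⟩
        refine ⟨h2, ?_⟩
        rintro ⟨h3, -⟩
        simp only [Set.mem_setOf_eq] at h1 h3
        omega
      · rintro ⟨h1, h2⟩
        have : ω ∈ B ∪ C := hsplit ▸ h1
        rcases this with h | h
        · exact absurd h h2
        · exact h
    have hPBfin : P B ≠ ⊤ := measure_ne_top P B
    have hPC : P C = P (A w) - P B := by
      rw [hCeq, measure_diff hBsub hBmeas.nullMeasurableSet hPBfin]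
    set r : ℝ := (P (A w)).toReal with hrdef
    have hr0 : 0 ≤ r := ENNReal.toReal_nonneg
    have hPA : P (A w) = ENNReal.ofReal r := (ENNReal.ofReal_toReal (measure_ne_top P _)).symm
    have hPB' : P B = ENNReal.ofReal (cw * r) := by
      rw [hPB, hPA, ← ENNReal.ofReal_mul hcw0]
    have hPC' : P C = ENNReal.ofReal ((1 - cw) * r) := by
      rw [hPC, hPA, hPB', ← ENNReal.ofReal_sub _ (mul_nonneg hcw0 hr0)]
      ring_nf
    have hintB : ∫⁻ ω in B, ENNReal.ofReal (Real.exp (l * (Y (n + 1) ω : ℝ))) ∂P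
        = ENNReal.ofReal (Real.exp (l * ((w (Fin.last n) : ℝ) + 1))) * P B := by
      rw [setLIntegral_congr_fun hBmeas
        ((fun ω hω => by
            rcases hω with ⟨h1, -⟩
            simp only [Set.mem_setOf_eq] at h1
            rw [h1]; push_cast; ring_nf :
          ∀ ω, ω ∈ B → ENNReal.ofReal (Real.exp (l * (Y (n + 1) ω : ℝ)))
            = ENNReal.ofReal (Real.exp (l * ((w (Fin.last n) : ℝ) + 1))))),
        setLIntegral_const]
    have hintC : ∫⁻ ω in C, ENNReal.ofReal (Real.exp (l * (Y (n + 1) ω : ℝ))) ∂P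
        = ENNReal.ofReal (Real.exp (l * ((w (Fin.last n) : ℝ) - 1))) * P C := by
      rw [setLIntegral_congr_fun hCmeas
        ((fun ω hω => by
            rcases hω with ⟨h1, -⟩
            simp only [Set.mem_setOf_eq] at h1
            rw [h1]; push_cast; ring_nf :
          ∀ ω, ω ∈ C → ENNReal.ofReal (Real.exp (l * (Y (n + 1) ω : ℝ)))
            = ENNReal.ofReal (Real.exp (l * ((w (Fin.last n) : ℝ) - 1))))),
        setLIntegral_const]
    have hreal : Real.exp (l * ((w (Fin.last n) : ℝ) + 1)) * (cw * r)
        + Real.exp (l * ((w (Fin.last n) : ℝ) - 1)) * ((1 - cw) * r)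
        ≤ (q * Real.exp l + (1 - q) * Real.exp (-l)) * (Real.exp (l * (w (Fin.last n) : ℝ)) * r) := by
      set x : ℝ := (w (Fin.last n) : ℝ)
      have e1 : Real.exp (l * (x + 1)) = Real.exp (l * x) * Real.exp l := by
        rw [← Real.exp_add]; ring_nf
      have e2 : Real.exp (l * (x - 1)) = Real.exp (l * x) * Real.exp (-l) := by
        rw [← Real.exp_add]; ring_nf
      rw [e1, e2]
      have hmono : Real.exp (-l) ≤ Real.exp l := Real.exp_le_exp.mpr (by linarith)
      have hkey : cw * Real.exp l + (1 - cw) * Real.exp (-l)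
          ≤ q * Real.exp l + (1 - q) * Real.exp (-l) := by nlinarith
      have hex : 0 < Real.exp (l * x) := Real.exp_pos _
      nlinarith [mul_le_mul_of_nonneg_right hkey (mul_nonneg hex.le hr0)]
    calc ∫⁻ ω in A w, ENNReal.ofReal (Real.exp (l * (Y (n + 1) ω : ℝ))) ∂P
        = ∫⁻ ω in B ∪ C, ENNReal.ofReal (Real.exp (l * (Y (n + 1) ω : ℝ))) ∂P := by rw [← hsplit]
      _ = (∫⁻ ω in B, ENNReal.ofReal (Real.exp (l * (Y (n + 1) ω : ℝ))) ∂P)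
          + ∫⁻ ω in C, ENNReal.ofReal (Real.exp (l * (Y (n + 1) ω : ℝ))) ∂P :=
          lintegral_union hCmeas hBC
      _ = ENNReal.ofReal (Real.exp (l * ((w (Fin.last n) : ℝ) + 1)) * (cw * r))
          + ENNReal.ofReal (Real.exp (l * ((w (Fin.last n) : ℝ) - 1)) * ((1 - cw) * r)) := by
          rw [hintB, hintC, hPB', hPC', ← ENNReal.ofReal_mul (Real.exp_pos _).le,
            ← ENNReal.ofReal_mul (Real.exp_pos _).le]
      _ = ENNReal.ofReal (Real.exp (l * ((w (Fin.last n) : ℝ) + 1)) * (cw * r)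
          + Real.exp (l * ((w (Fin.last n) : ℝ) - 1)) * ((1 - cw) * r)) := by
          rw [← ENNReal.ofReal_add
            (mul_nonneg (Real.exp_pos _).le (mul_nonneg hcw0 hr0))
            (mul_nonneg (Real.exp_pos _).le (mul_nonneg (by linarith) hr0))]
      _ ≤ ENNReal.ofReal ((q * Real.exp l + (1 - q) * Real.exp (-l)) *
            (Real.exp (l * (w (Fin.last n) : ℝ)) * r)) := ENNReal.ofReal_le_ofReal hreal
      _ = ENNReal.ofReal (q * Real.exp l + (1 - q) * Real.exp (-l)) *
            (ENNReal.ofReal (Real.exp (l * (w (Fin.last n) : ℝ))) * P (A w)) := by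
          rw [hPA, ← ENNReal.ofReal_mul (Real.exp_pos _).le, ← ENNReal.ofReal_mul hc0]
  rw [hdecomp, hdecomp (fun ω => ENNReal.ofReal (Real.exp (l * (Y n ω : ℝ)))),
    ← ENNReal.tsum_mul_left]
  exact Summable.tsum_le_tsum (fun w => (key_g' w).trans (le_of_eq (by rw [key_g w])))
    ENNReal.summable ENNReal.summable


lemma erw_moment_bound {Ω : Type*} [MeasurableSpace Ω] (P : Measure Ω) [IsProbabilityMeasure P]
    {q : ℝ} (hq : q ∈ Set.Ioo (1 / 2 : ℝ) 1)
    {M : ℕ} {p : Fin M → ℝ} (hp : ∀ i, p i ∈ Set.Ioo (0 : ℝ) 1) (hpq : ∀ i, p i ≤ q)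
    {Y : ℕ → Ω → ℤ} (hY : IsEARW P M p (1 / 2) Y)
    {l : ℝ} (hl : 0 ≤ l) (n : ℕ) :
    ∫⁻ ω, ENNReal.ofReal (Real.exp (l * (Y n ω : ℝ))) ∂P
      ≤ ENNReal.ofReal (q * Real.exp l + (1 - q) * Real.exp (-l)) ^ n := by
  induction n with
  | zero =>
    have : (fun ω => ENNReal.ofReal (Real.exp (l * (Y 0 ω : ℝ)))) = fun _ => 1 := by
      funext ω
      rw [hY.init ω]
      norm_num
    rw [this, lintegral_one, measure_univ, pow_zero]
  | succ n ih =>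
    calc ∫⁻ ω, ENNReal.ofReal (Real.exp (l * (Y (n + 1) ω : ℝ))) ∂P
        ≤ ENNReal.ofReal (q * Real.exp l + (1 - q) * Real.exp (-l)) *
          ∫⁻ ω, ENNReal.ofReal (Real.exp (l * (Y n ω : ℝ))) ∂P :=
          step_bound P hq hp hpq hY hl n
      _ ≤ ENNReal.ofReal (q * Real.exp l + (1 - q) * Real.exp (-l)) *
          ENNReal.ofReal (q * Real.exp l + (1 - q) * Real.exp (-l)) ^ n :=
          mul_le_mul_right ih _
      _ = ENNReal.ofReal (q * Real.exp l + (1 - q) * Real.exp (-l)) ^ (n + 1) :=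
          (pow_succ' _ _).symm

lemma erw_chernoff {Ω : Type*} [MeasurableSpace Ω] (P : Measure Ω) [IsProbabilityMeasure P]
    {q : ℝ} (hq : q ∈ Set.Ioo (1 / 2 : ℝ) 1)
    {M : ℕ} {p : Fin M → ℝ} (hp : ∀ i, p i ∈ Set.Ioo (0 : ℝ) 1) (hpq : ∀ i, p i ≤ q)
    {Y : ℕ → Ω → ℤ} (hY : IsEARW P M p (1 / 2) Y)
    {l : ℝ} (hl : 0 ≤ l) (t : ℝ) (n : ℕ) :
    P {ω | t * n ≤ (Y n ω : ℝ)}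
      ≤ ENNReal.ofReal (Real.exp (-(l * (t * n)))) *
        ENNReal.ofReal (q * Real.exp l + (1 - q) * Real.exp (-l)) ^ n := by
  set f : Ω → ℝ≥0∞ := fun ω => ENNReal.ofReal (Real.exp (l * (Y n ω : ℝ))) with hf
  have hfm : Measurable f := by
    apply Measurable.ennreal_ofReal
    exact (Real.continuous_exp.measurable).comp
      ((measurable_const.mul (measurable_from_top.comp (hY.measurable n))))
  have hsub : {ω | t * n ≤ (Y n ω : ℝ)} ⊆ {ω | ENNReal.ofReal (Real.exp (l * (t * n))) ≤ f ω} := by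
    intro ω hω
    exact ENNReal.ofReal_le_ofReal (Real.exp_le_exp.mpr (mul_le_mul_of_nonneg_left hω hl))
  set ε : ℝ≥0∞ := ENNReal.ofReal (Real.exp (l * (t * n))) with he
  have hmarkov : ε * P {ω | ε ≤ f ω} ≤ ∫⁻ ω, f ω ∂P :=
    mul_meas_ge_le_lintegral₀ hfm.aemeasurable ε
  have h1 : ε * P {ω | t * n ≤ (Y n ω : ℝ)}
      ≤ ENNReal.ofReal (q * Real.exp l + (1 - q) * Real.exp (-l)) ^ n :=
    le_trans (le_trans (mul_le_mul_right (measure_mono hsub) ε) hmarkov)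
      (erw_moment_bound P hq hp hpq hY hl n)
  have hinv : ENNReal.ofReal (Real.exp (-(l * (t * n)))) * ε = 1 := by
    rw [he, ← ENNReal.ofReal_mul (Real.exp_pos _).le, ← Real.exp_add]
    norm_num
  calc P {ω | t * n ≤ (Y n ω : ℝ)}
      = ENNReal.ofReal (Real.exp (-(l * (t * n)))) * (ε * P {ω | t * n ≤ (Y n ω : ℝ)}) := by
        rw [← mul_assoc, hinv, one_mul]
    _ ≤ _ := mul_le_mul_right h1 _

lemma abs_Y_le {Ω : Type*} {Y : ℕ → Ω → ℤ}
    (hY0 : ∀ ω, Y 0 ω = 0) (hst : ∀ ω n, |Y (n + 1) ω - Y n ω| = 1)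
    (ω : Ω) (n : ℕ) : |Y n ω| ≤ (n : ℤ) := by
  induction n with
  | zero => simp [hY0 ω]
  | succ n ih =>
    have h1 := hst ω n
    have h2 : |Y (n + 1) ω| - |Y n ω| ≤ |Y (n + 1) ω - Y n ω| := abs_sub_abs_le_abs_sub _ _
    push_cast
    omega

lemma erw_ae_limsup_le {Ω : Type*} [MeasurableSpace Ω] (P : Measure Ω) [IsProbabilityMeasure P]
    {q : ℝ} (hq : q ∈ Set.Ioo (1 / 2 : ℝ) 1)
    {M : ℕ} {p : Fin M → ℝ} (hp : ∀ i, p i ∈ Set.Ioo (0 : ℝ) 1) (hpq : ∀ i, p i ≤ q)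
    {Y : ℕ → Ω → ℤ} (hY : IsEARW P M p (1 / 2) Y)
    {eps : ℝ} (he : 0 < eps) (he1 : eps ≤ 1) :
    ∀ᵐ ω ∂P, Filter.limsup (fun n : ℕ => (Y n ω : ℝ) / n) atTop ≤ 2 * q - 1 + eps := by
  set t : ℝ := 2 * q - 1 + eps with ht
  set l : ℝ := eps / 2 with hl
  have hl0 : 0 ≤ l := by positivity
  set ρ : ℝ := Real.exp (-(eps ^ 2 / 4)) with hρ
  have hρ1 : ρ < 1 := Real.exp_lt_one_iff.mpr (by positivity |> neg_neg_iff_pos.mpr)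
  have hbound : ∀ n : ℕ, P {ω | t * n ≤ (Y n ω : ℝ)} ≤ ENNReal.ofReal ρ ^ n := by
    intro n
    refine (erw_chernoff P hq hp hpq hY hl0 t n).trans ?_
    have e1 : Real.exp (-(l * (t * n))) = Real.exp (-(l * t)) ^ n := by
      rw [← Real.exp_nat_mul]
      ring_nf
    rw [e1, ENNReal.ofReal_pow (Real.exp_pos _).le, ← mul_pow,
      ← ENNReal.ofReal_mul (Real.exp_pos _).le]
    exact pow_le_pow_left' (ENNReal.ofReal_le_ofReal (core_est hq.1 hq.2 he he1)) n
  have hsum : (∑' n, P {ω | t * n ≤ (Y n ω : ℝ)}) ≠ ⊤ := by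
    refine ne_top_of_le_ne_top ?_ (ENNReal.tsum_le_tsum hbound)
    rw [ENNReal.tsum_geometric]
    refine ENNReal.inv_ne_top.mpr ?_
    rw [← pos_iff_ne_zero, tsub_pos_iff_lt]
    exact ENNReal.ofReal_lt_one.mpr hρ1
  filter_upwards [ae_eventually_notMem hsum] with ω hω
  have hev : ∀ᶠ n : ℕ in atTop, (Y n ω : ℝ) / n ≤ t := by
    filter_upwards [hω, eventually_ge_atTop 1] with n hn hn1
    have hlt : (Y n ω : ℝ) < t * n := lt_of_not_ge hn
    have hnpos : (0 : ℝ) < n := by exact_mod_cast hn1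
    rw [div_le_iff₀ hnpos]
    linarith
  have hcb : IsCoboundedUnder (· ≤ ·) atTop (fun n : ℕ => (Y n ω : ℝ) / n) := by
    apply isCoboundedUnder_le_of_le atTop (x := (-1 : ℝ))
    intro n
    cases n with
    | zero => simp [hY.init ω]
    | succ n =>
      have h1 : -((n : ℝ) + 1) ≤ ((Y (n + 1) ω : ℤ) : ℝ) := by
        have h := (abs_le.mp (abs_Y_le hY.init hY.steps ω (n + 1))).1
        exact_mod_cast h
      have hnpos : (0 : ℝ) < ((n + 1 : ℕ) : ℝ) := by positivity
      rw [le_div_iff₀ hnpos]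
      push_cast
      push_cast at h1
      linarith
  exact limsup_le_of_le hcb hev


/-- **Upper bound on the speed via domination.**
If `q ∈ (1/2,1)` and every cookie strength satisfies `p i ≤ q`, then the standard
excited random walk with cookie vector `p` satisfies, almost surely,
`limsup Y n / n ≤ 2 q - 1`. -/
theorem excited_rw_limsup_le
    {Ω : Type*} [MeasurableSpace Ω] (P : Measure Ω) [IsProbabilityMeasure P]
    (q : ℝ) (hq : q ∈ Set.Ioo (1 / 2 : ℝ) 1)
    (M : ℕ) (hM : 1 ≤ M) (p : Fin M → ℝ) (hp : ∀ i, p i ∈ Set.Ioo (0 : ℝ) 1)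
    (hpq : ∀ i, p i ≤ q)
    (Y : ℕ → Ω → ℤ) (hY : IsEARW P M p (1 / 2) Y) :
    ∀ᵐ ω ∂P, Filter.limsup (fun n : ℕ => (Y n ω : ℝ) / n) atTop ≤ 2 * q - 1 := by
  have key : ∀ k : ℕ, ∀ᵐ ω ∂P,
      Filter.limsup (fun n : ℕ => (Y n ω : ℝ) / n) atTop ≤ 2 * q - 1 + 1 / ((k : ℝ) + 1) := by
    intro k
    refine erw_ae_limsup_le P hq hp hpq hY ?_ ?_
    · positivity
    · rw [div_le_one (by positivity)]
      have : (0 : ℝ) ≤ (k : ℝ) := Nat.cast_nonneg k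
      linarith
  filter_upwards [ae_all_iff.mpr key] with ω hω
  have htend : Tendsto (fun k : ℕ => 2 * q - 1 + 1 / ((k : ℝ) + 1)) atTop (𝓝 (2 * q - 1)) := by
    have h0 := tendsto_one_div_add_atTop_nhds_zero_nat (𝕜 := ℝ)
    simpa using tendsto_const_nhds.add h0
  exact ge_of_tendsto' htend hω
end

section
/- Let M ≥ 3 and p ∈ (1/2, 1) satisfy M(2p − 1) > 2. For i ∈ ℕ define p^{(i)} = 1/2 + M(2p−1)/(2(M+i)) and let p_i = (p^{(i)},…,p^{(i)}) ∈ (0,1)^{M+i} (so that δ(M+i, p_i) = M(2p−1) for all i). Let (Y^{(i)}_n)_{n≥0} be the standard excited random walk with M+i cookies and cookie strength vector p_i, and suppose that for each i, Y^{(i)}_n / n converges almost surely to a deterministic constant v(M+i, p_i). Then lim_{i→∞} v(M+i, p_i) = 0. -/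
open MeasureTheory ProbabilityTheory Filter Topology
open scoped ENNReal NNReal

section Aux

variable {Ω : Type*} [MeasurableSpace Ω] {P : Measure Ω} [IsProbabilityMeasure P]
  {M : ℕ} {p : Fin M → ℝ} {X : ℕ → Ω → ℤ}

lemma earw_abs_le (hX : IsEARW P M p (1/2) X) (n : ℕ) (ω : Ω) : |X n ω| ≤ n := by
  induction n with
  | zero => simp [hX.init ω]
  | succ n ih =>
      have h := hX.steps ω n
      have : |X (n+1) ω| ≤ |X n ω| + |X (n+1) ω - X n ω| := by
        have := abs_add_le (X n ω) (X (n+1) ω - X n ω); simpa using this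
      rw [h] at this
      push_cast
      omega

/-- up-step probability bound. -/
lemma earw_step_prob (hX : IsEARW P M p (1/2) X) {q : ℝ} (hq : 1/2 ≤ q)
    (hp : ∀ j, p j ∈ Set.Icc (1/2 : ℝ) q) (n : ℕ) :
    ENNReal.ofReal (1/2) ≤ P {ω | X (n+1) ω = X n ω + 1} ∧
      P {ω | X (n+1) ω = X n ω + 1} ≤ ENNReal.ofReal q := by
  classical
  set A : (Fin (n+1) → ℤ) → Set Ω := fun w => {ω | ∀ m : Fin (n+1), X m ω = w m} with hA
  have hAmeas : ∀ w, MeasurableSet (A w) := by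
    intro w
    have : A w = ⋂ m : Fin (n+1), (X m) ⁻¹' {w m} := by
      ext ω; simp [hA, Set.mem_iInter]
    rw [this]
    exact MeasurableSet.iInter fun m => (hX.measurable m) (measurableSet_singleton _)
  have hAdisj : Pairwise (Function.onFun Disjoint A) := by
    intro w w' hww
    refine Set.disjoint_left.2 fun ω h1 h2 => hww ?_
    funext m; rw [← h1 m, ← h2 m]
  have hAcover : ⋃ w, A w = Set.univ := by
    ext ω
    simp only [Set.mem_iUnion, Set.mem_univ, iff_true]
    exact ⟨fun m => X m ω, fun m => rfl⟩
  have hsum1 : ∑' w, P (A w) = 1 := by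
    rw [← measure_iUnion hAdisj hAmeas, hAcover, measure_univ]
  set S : Set Ω := {ω | X (n+1) ω = X n ω + 1} with hS
  have hSdecomp : S = ⋃ w, (S ∩ A w) := by
    rw [← Set.inter_iUnion, hAcover, Set.inter_univ]
  have hSw : ∀ w, S ∩ A w =
      {ω | X (n+1) ω = w (Fin.last n) + 1} ∩ A w := by
    intro w
    ext ω
    simp only [Set.mem_inter_iff, hS, Set.mem_setOf_eq, hA, and_congr_left_iff]
    intro hω
    rw [← hω (Fin.last n)]
    simp [Fin.val_last]
  have hSmeas : MeasurableSet S := by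
    have : S = (fun ω => X (n+1) ω - X n ω) ⁻¹' {1} := by
      ext ω; simp [hS, sub_eq_iff_eq_add']
    rw [this]
    exact ((hX.measurable (n+1)).sub (hX.measurable n)) (measurableSet_singleton 1)
  have hPS : P S = ∑' w, ENNReal.ofReal
      (cookieSeq M p (1/2)
        ((Finset.univ.filter fun m : Fin (n+1) => w m = w (Fin.last n)).card - 1)) * P (A w) := by
    rw [hSdecomp, measure_iUnion (fun w w' hww => (hAdisj hww).mono
        Set.inter_subset_right Set.inter_subset_right)
      (fun w => hSmeas.inter (hAmeas w))]
    congr 1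
    funext w
    rw [hSw w, hX.cond n w]
  have hcookie : ∀ j : ℕ, cookieSeq M p (1/2) j ∈ Set.Icc (1/2 : ℝ) q := by
    intro j
    unfold cookieSeq
    split
    · exact hp _
    · exact ⟨le_refl _, hq⟩
  constructor
  · calc ENNReal.ofReal (1/2) = ENNReal.ofReal (1/2) * ∑' w, P (A w) := by
          rw [hsum1, mul_one]
      _ = ∑' w, ENNReal.ofReal (1/2) * P (A w) := ENNReal.tsum_mul_left.symm
      _ ≤ _ := by
          rw [hPS]
          exact ENNReal.tsum_le_tsum fun w =>
            mul_le_mul_left (ENNReal.ofReal_le_ofReal (hcookie _).1) _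
  · calc P S ≤ ∑' w, ENNReal.ofReal q * P (A w) := by
          rw [hPS]
          exact ENNReal.tsum_le_tsum fun w =>
            mul_le_mul_left (ENNReal.ofReal_le_ofReal (hcookie _).2) _
      _ = ENNReal.ofReal q := by rw [ENNReal.tsum_mul_left, hsum1, mul_one]


lemma earw_integrable (hX : IsEARW P M p (1/2) X) (n : ℕ) :
    Integrable (fun ω => (X n ω : ℝ)) P := by
  refine (integrable_const (n : ℝ)).mono' ?_ ?_
  · exact (measurable_from_top.comp (hX.measurable n)).aestronglyMeasurable
  · refine Filter.Eventually.of_forall fun ω => ?_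
    have := earw_abs_le hX n ω
    rw [Real.norm_eq_abs]
    exact_mod_cast (by exact_mod_cast this : |(X n ω : ℝ)| ≤ (n : ℝ))

lemma earw_exp_bound (hX : IsEARW P M p (1/2) X) {q : ℝ} (hq : 1/2 ≤ q)
    (hp : ∀ j, p j ∈ Set.Icc (1/2 : ℝ) q) (n : ℕ) :
    (∫ ω, (X n ω : ℝ) ∂P) ∈ Set.Icc (0 : ℝ) (n * (2 * q - 1)) := by
  induction n with
  | zero => simp [hX.init]
  | succ n ih =>
      set S : Set Ω := {ω | X (n+1) ω = X n ω + 1} with hS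
      have hSmeas : MeasurableSet S := by
        have : S = (fun ω => X (n+1) ω - X n ω) ⁻¹' {1} := by
          ext ω; simp [hS, sub_eq_iff_eq_add']
        rw [this]
        exact ((hX.measurable (n+1)).sub (hX.measurable n)) (measurableSet_singleton 1)
      have hprob := earw_step_prob hX hq hp n
      have hPfin : P S ≠ ∞ := measure_ne_top P S
      have ha1 : (1/2 : ℝ) ≤ (P S).toReal :=
        (ENNReal.ofReal_le_iff_le_toReal hPfin).1 hprob.1
      have ha2 : (P S).toReal ≤ q :=
        ENNReal.toReal_le_of_le_ofReal (le_trans (by norm_num) hq) hprob.2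
      have hptw : (fun ω => ((X (n+1) ω : ℝ) - X n ω))
          = fun ω => S.indicator (fun _ => (2:ℝ)) ω - 1 := by
        funext ω
        by_cases hω : ω ∈ S
        · rw [Set.indicator_of_mem hω]
          have : X (n+1) ω = X n ω + 1 := hω
          rw [this]; push_cast; ring
        · rw [Set.indicator_of_notMem hω]
          have hne : X (n+1) ω - X n ω ≠ 1 := by
            intro h; exact hω (by simpa [hS, sub_eq_iff_eq_add'] using h)
          have : X (n+1) ω - X n ω = -1 :=
            ((abs_eq (by norm_num : (0:ℤ) ≤ 1)).1 (hX.steps ω n)).resolve_left hne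
          have : (X (n+1) ω : ℝ) - X n ω = -1 := by exact_mod_cast this
          rw [this]; ring
      have hdiff : ∫ ω, ((X (n+1) ω : ℝ) - X n ω) ∂P = 2 * (P S).toReal - 1 := by
        rw [hptw, integral_sub ((integrable_const (2:ℝ)).indicator hSmeas)
          (integrable_const 1), integral_indicator_const (2:ℝ) hSmeas, integral_const]
        simp [measure_univ, smul_eq_mul, mul_comm, measureReal_def]
      have hsplit : ∫ ω, (X (n+1) ω : ℝ) ∂P
          = (∫ ω, (X n ω : ℝ) ∂P) + (2 * (P S).toReal - 1) := by
        have hadd := integral_add (earw_integrable hX n)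
          ((earw_integrable hX (n+1)).sub (earw_integrable hX n))
        simp only [Pi.sub_apply] at hadd
        rw [← hdiff, ← hadd]
        congr 1; funext ω; ring
      constructor
      · rw [hsplit]
        have : (0:ℝ) ≤ 2 * (P S).toReal - 1 := by linarith
        linarith [ih.1]
      · rw [hsplit]
        have h2 : 2 * (P S).toReal - 1 ≤ 2 * q - 1 := by linarith
        have := ih.2
        push_cast
        linarith

lemma earw_speed_bound (hX : IsEARW P M p (1/2) X) {q : ℝ} (hq : 1/2 ≤ q)
    (hp : ∀ j, p j ∈ Set.Icc (1/2 : ℝ) q) {v : ℝ}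
    (hv : ∀ᵐ ω ∂P, Tendsto (fun n : ℕ => (X n ω : ℝ) / n) atTop (nhds v)) :
    v ∈ Set.Icc (0 : ℝ) (2 * q - 1) := by
  have hmeas : ∀ n : ℕ, AEStronglyMeasurable (fun ω => (X n ω : ℝ) / n) P :=
    fun n => ((measurable_from_top.comp (hX.measurable n)).div_const _).aestronglyMeasurable
  have hbound : ∀ n : ℕ, ∀ᵐ ω ∂P, ‖(X n ω : ℝ) / n‖ ≤ (1 : ℝ) := by
    intro n
    refine Filter.Eventually.of_forall fun ω => ?_
    rcases Nat.eq_zero_or_pos n with h | h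
    · simp [h]
    · rw [Real.norm_eq_abs, abs_div, abs_of_nonneg (by positivity : (0:ℝ) ≤ (n:ℝ)),
        div_le_one (by exact_mod_cast h)]
      exact_mod_cast earw_abs_le hX n ω
  have hlim : Tendsto (fun n : ℕ => ∫ ω, (X n ω : ℝ) / n ∂P) atTop
      (nhds (∫ _ω, v ∂P)) :=
    tendsto_integral_of_dominated_convergence (fun _ => (1:ℝ)) hmeas
      (integrable_const 1) hbound hv
  have hintv : (∫ _ω, v ∂P) = v := by simp
  rw [hintv] at hlim
  have hIn : ∀ n : ℕ, ∫ ω, (X n ω : ℝ) / n ∂P = (∫ ω, (X n ω : ℝ) ∂P) / n :=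
    fun n => integral_div _ _
  constructor
  · refine ge_of_tendsto hlim ?_
    refine Filter.Eventually.of_forall fun n => ?_
    rw [hIn]
    exact div_nonneg (earw_exp_bound hX hq hp n).1 (by positivity)
  · refine le_of_tendsto hlim ?_
    filter_upwards [Filter.eventually_ge_atTop 1] with n hn
    rw [hIn]
    rw [div_le_iff₀ (by exact_mod_cast hn : (0:ℝ) < (n:ℝ))]
    calc ∫ ω, (X n ω : ℝ) ∂P ≤ n * (2*q-1) := (earw_exp_bound hX hq hp n).2
      _ = (2*q-1) * n := by ring

end Aux

/-- **Walks with the same `δ` but more, weaker cookies slow down to zero.**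
Fix `M ≥ 3` and `p ∈ (1/2,1)` with `M (2p - 1) > 2`.  For `i ∈ ℕ` let
`pI i = 1/2 + M (2p-1) / (2 (M+i))`, so the cookie vector `(pI i, …, pI i) ∈ ℝ^(M+i)`
has `δ(M+i, p_i) = M (2p-1)` for every `i`.  If `Y^(i)` is the standard excited random
walk with `M+i` cookies of strength `pI i` and `Y^(i) n / n → v i` a.s., then
`v i → 0` as `i → ∞`. -/
theorem speed_tendsto_zero_same_delta
    (M : ℕ) (hM : 3 ≤ M) (p : ℝ) (hp : p ∈ Set.Ioo (1 / 2 : ℝ) 1)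
    (hδ : 2 < (M : ℝ) * (2 * p - 1))
    (pI : ℕ → ℝ) (hpI : ∀ i : ℕ, pI i = 1 / 2 + (M : ℝ) * (2 * p - 1) / (2 * (M + i)))
    (Ω : ℕ → Type*) [∀ i, MeasurableSpace (Ω i)]
    (P : ∀ i, Measure (Ω i)) [∀ i, IsProbabilityMeasure (P i)]
    (Y : ∀ i : ℕ, ℕ → Ω i → ℤ)
    (hY : ∀ i, IsEARW (P i) (M + i) (fun _ => pI i) (1 / 2) (Y i))
    (v : ℕ → ℝ)
    (hv : ∀ i, ∀ᵐ ω ∂P i,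
      Tendsto (fun n : ℕ => (Y i n ω : ℝ) / n) atTop (nhds (v i))) :
    Tendsto v atTop (nhds 0) := by
  have hc : (0:ℝ) < (M : ℝ) * (2 * p - 1) := lt_trans (by norm_num) hδ
  have hMpos : (0:ℝ) < M := by exact_mod_cast lt_of_lt_of_le (by norm_num) hM
  have hbnd : ∀ i, v i ∈ Set.Icc (0:ℝ) (2 * pI i - 1) := by
    intro i
    have hqi : (1/2 : ℝ) ≤ pI i := by
      rw [hpI i]
      have hd : (0:ℝ) < 2 * ((M:ℝ) + i) := by positivity
      have : (0:ℝ) ≤ (M : ℝ) * (2 * p - 1) / (2 * (M + i)) :=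
        div_nonneg hc.le hd.le
      linarith
    exact earw_speed_bound (hY i) hqi (fun j => ⟨hqi, le_refl _⟩) (hv i)
  have heq : ∀ i : ℕ, 2 * pI i - 1 = (M:ℝ) * (2*p-1) / (M + i) := by
    intro i
    rw [hpI i]
    have h0 : (0:ℝ) < (M:ℝ) + i := by positivity
    field_simp
    ring
  have hlim : Tendsto (fun i : ℕ => (M:ℝ) * (2*p-1) / (M + i)) atTop (nhds 0) :=
    Tendsto.div_atTop tendsto_const_nhds
      (tendsto_atTop_add_const_left _ _ tendsto_natCast_atTop_atTop)
  have hlim' : Tendsto (fun i : ℕ => 2 * pI i - 1) atTop (nhds 0) := by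
    rw [show (fun i : ℕ => 2 * pI i - 1) = fun i : ℕ => (M:ℝ) * (2*p-1) / (M + i) from
      funext heq]
    exact hlim
  exact squeeze_zero (fun i => (hbnd i).1) (fun i => (hbnd i).2) hlim'
end

section
/- For every η > 0 and every ε > 0, there exist M ≥ 3 and p ∈ (0,1)^M such that δ(M,p) > η, δ(M,p) > 2, and the standard excited random walk (Y_n)_{n≥0} with M cookies and cookie strength vector p satisfies limsup_{n→∞} Y_n / n < ε almost surely. -/
open MeasureTheory ProbabilityTheory Filter Topology
open scoped ENNReal NNReal

/-! ### Auxiliary material for the proof -/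

/-- The `k`-th increment of the `±1`-path encoded by the sign sequence `s`. -/
def ERWstp (n : ℕ) (s : Fin n → Bool) (k : ℕ) : ℤ :=
  if h : k < n then (if s ⟨k, h⟩ then 1 else -1) else 0

/-- The `±1`-path encoded by the sign sequence `s`. -/
def ERWpw (n : ℕ) (s : Fin n → Bool) (m : ℕ) : ℤ := ∑ k ∈ Finset.range m, ERWstp n s k

lemma ERWpw_succ (n : ℕ) (s : Fin n → Bool) (m : ℕ) :
    ERWpw n s (m+1) = ERWpw n s m + ERWstp n s m := Finset.sum_range_succ _ _

lemma ERWstp_lt {n : ℕ} (s : Fin n → Bool) {k : ℕ} (hk : k < n) :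
    ERWstp n s k = if s ⟨k, hk⟩ then 1 else -1 := dif_pos hk

lemma ERWpw_n (n : ℕ) (s : Fin n → Bool) :
    ERWpw n s n = ∑ i : Fin n, (if s i then (1:ℤ) else -1) := by
  rw [ERWpw, ← Fin.sum_univ_eq_sum_range]
  exact Finset.sum_congr rfl fun i _ => by rw [ERWstp_lt s i.isLt]

/-- The real per-step cost. -/
noncomputable def ERWrc (q : ℝ) (b : Bool) : ℝ := if b then q else 1/2

lemma ERWprod_cost_eq {q : ℝ} (hq : 0 ≤ q) (n : ℕ) (s : Fin n → Bool) :
    (∏ k ∈ Finset.range n,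
      (if ERWpw n s (k+1) = ERWpw n s k + 1 then ENNReal.ofReal q else ENNReal.ofReal (1/2)))
    = ENNReal.ofReal (∏ i : Fin n, ERWrc q (s i)) := by
  have h1 : ∀ k ∈ Finset.range n,
      (if ERWpw n s (k+1) = ERWpw n s k + 1 then ENNReal.ofReal q else ENNReal.ofReal (1/2))
        = ENNReal.ofReal (if ERWstp n s k = 1 then q else 1/2) := by
    intro k hk
    have : ERWpw n s (k+1) = ERWpw n s k + 1 ↔ ERWstp n s k = 1 := by
      rw [ERWpw_succ]; omega
    by_cases hc : ERWstp n s k = 1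
    · rw [if_pos (this.mpr hc), if_pos hc]
    · rw [if_neg (fun hh => hc (this.mp hh)), if_neg hc]
  rw [Finset.prod_congr rfl h1]
  rw [← Fin.prod_univ_eq_prod_range
      (fun k => ENNReal.ofReal (if ERWstp n s k = 1 then q else 1/2)) n]
  rw [← ENNReal.ofReal_prod_of_nonneg ?hnn]
  · congr 1
    refine Finset.prod_congr rfl fun i _ => ?_
    rw [ERWstp_lt s i.isLt]
    rcases hsi : s i with _ | _ <;> simp [ERWrc, Fin.eta, hsi]
  · intro i _
    split
    · exact hq
    · norm_num

open scoped Classical in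
/-- The key counting bound. -/
lemma ERWcount_bound {q x ε' : ℝ} (hq : (1:ℝ)/2 ≤ q) (hx : 1 < x) (n : ℕ) :
    ∑ s ∈ Finset.univ.filter (fun s : Fin n → Bool => ε' * n ≤ ((ERWpw n s n : ℤ) : ℝ)),
      ENNReal.ofReal (∏ i : Fin n, ERWrc q (s i))
    ≤ ENNReal.ofReal (((q * x + 1/(2*x)) * x ^ (-ε')) ^ n) := by
  have hx0 : (0:ℝ) < x := lt_trans one_pos hx
  have hq0 : (0:ℝ) ≤ q := le_trans (by norm_num) hq
  set t : Bool → ℝ := fun b => if b then q * x else 1/(2*x) with ht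
  have ht0 : ∀ b, 0 ≤ t b := by
    intro b
    rcases b <;> simp [ht] <;> positivity
  have hterm : ∀ s : Fin n → Bool, ε' * n ≤ ((ERWpw n s n : ℤ) : ℝ) →
      (∏ i : Fin n, ERWrc q (s i)) ≤ x ^ (-(ε' * n)) * ∏ i : Fin n, t (s i) := by
    intro s hs
    have hsplit : ∀ i : Fin n, t (s i) = ERWrc q (s i) * (if s i then x else x⁻¹) := by
      intro i; rcases hsi : s i <;> simp [ht, ERWrc, hsi] <;> ring
    have hprod : (∏ i : Fin n, t (s i))
        = (∏ i : Fin n, ERWrc q (s i)) * ∏ i : Fin n, (if s i then x else x⁻¹) := by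
      rw [← Finset.prod_mul_distrib]
      exact Finset.prod_congr rfl fun i _ => hsplit i
    set U := (Finset.univ.filter (fun i : Fin n => s i = true)).card with hU
    have hcards : U + (Finset.univ.filter (fun i : Fin n => ¬ (s i = true))).card = n := by
      rw [hU, Finset.card_filter_add_card_filter_not]
      simp
    have hUn : U ≤ n := le_of_add_le_left hcards.le
    have hxprod : (∏ i : Fin n, (if s i then x else x⁻¹)) = x ^ U * x⁻¹ ^ (n - U) := by
      have h := @Finset.prod_ite (Fin n) ℝ _ Finset.univ (fun i => s i = true)
        (fun _ => instDecidableEqBool _ _) (fun _ => x) (fun _ => x⁻¹)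
      simp only [Finset.prod_const] at h
      rw [h, ← hU]
      congr 2
      omega
    have hpwval : ((ERWpw n s n : ℤ) : ℝ) = (U:ℝ) - ((n:ℝ) - U) := by
      rw [ERWpw_n]
      have h := @Finset.sum_ite (Fin n) ℤ _ Finset.univ (fun i => s i = true)
        (fun _ => instDecidableEqBool _ _) (fun _ => (1:ℤ)) (fun _ => (-1:ℤ))
      simp only [Finset.sum_const, nsmul_eq_mul, mul_one, mul_neg_one] at h
      rw [h, ← hU]
      have hc2 : (Finset.univ.filter (fun i : Fin n => ¬ (s i = true))).card = n - U := by omega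
      rw [hc2]
      push_cast [hUn]
      ring
    have hrpow : x ^ (ε' * n) ≤ x ^ U * x⁻¹ ^ (n - U) := by
      have e1 : (x:ℝ) ^ U * x⁻¹ ^ (n - U) = x ^ ((U:ℝ) - ((n:ℝ) - U)) := by
        rw [inv_pow, ← Real.rpow_natCast x U, ← Real.rpow_natCast x (n - U),
          ← Real.rpow_neg hx0.le, ← Real.rpow_add hx0]
        congr 1
        push_cast [hUn]
        ring
      rw [e1, Real.rpow_le_rpow_left_iff hx]
      rw [hpwval] at hs
      exact hs
    have hrc0 : (0:ℝ) ≤ ∏ i : Fin n, ERWrc q (s i) := by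
      refine Finset.prod_nonneg fun i _ => ?_
      rcases s i <;> simp [ERWrc] <;> norm_num
      exact hq0
    calc (∏ i : Fin n, ERWrc q (s i))
        = x ^ (-(ε' * n)) * (x ^ (ε' * n) * ∏ i : Fin n, ERWrc q (s i)) := by
          rw [← mul_assoc, ← Real.rpow_add hx0]
          simp
      _ ≤ x ^ (-(ε' * n)) * ∏ i : Fin n, t (s i) := by
          refine mul_le_mul_of_nonneg_left ?_ (Real.rpow_nonneg hx0.le _)
          rw [hprod, mul_comm ((∏ i : Fin n, ERWrc q (s i)))]
          exact mul_le_mul_of_nonneg_right (by rw [← hxprod] at hrpow; exact hrpow) hrc0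
  have hsum : ∑ s : Fin n → Bool, (∏ i : Fin n, t (s i)) = (q * x + 1/(2*x)) ^ n := by
    have h := Finset.prod_univ_sum (fun _ : Fin n => (Finset.univ : Finset Bool))
      (fun _ b => t b)
    rw [Fintype.piFinset_univ] at h
    rw [← h]
    simp [ht, Finset.prod_const]
  calc ∑ s ∈ Finset.univ.filter (fun s : Fin n → Bool => ε' * n ≤ ((ERWpw n s n : ℤ) : ℝ)),
        ENNReal.ofReal (∏ i : Fin n, ERWrc q (s i))
      ≤ ∑ s ∈ Finset.univ.filter (fun s : Fin n → Bool => ε' * n ≤ ((ERWpw n s n : ℤ) : ℝ)),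
        ENNReal.ofReal (x ^ (-(ε' * n)) * ∏ i : Fin n, t (s i)) := by
        refine Finset.sum_le_sum fun s hs => ?_
        refine ENNReal.ofReal_le_ofReal (hterm s ?_)
        exact (Finset.mem_filter.mp hs).2
    _ ≤ ∑ s : Fin n → Bool,
        ENNReal.ofReal (x ^ (-(ε' * n)) * ∏ i : Fin n, t (s i)) := by
        exact Finset.sum_le_sum_of_subset (Finset.filter_subset _ _)
    _ = ENNReal.ofReal (∑ s : Fin n → Bool, x ^ (-(ε' * n)) * ∏ i : Fin n, t (s i)) := by
        rw [ENNReal.ofReal_sum_of_nonneg]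
        intro s _
        exact mul_nonneg (Real.rpow_nonneg hx0.le _) (Finset.prod_nonneg fun i _ => ht0 _)
    _ ≤ ENNReal.ofReal (((q * x + 1/(2*x)) * x ^ (-ε')) ^ n) := by
        refine ENNReal.ofReal_le_ofReal ?_
        rw [← Finset.mul_sum, hsum, mul_pow]
        have e2 : x ^ (-(ε' * n)) = (x ^ (-ε')) ^ n := by
          rw [← Real.rpow_natCast (x ^ (-ε')) n, ← Real.rpow_mul hx0.le]
          ring_nf
        rw [e2, mul_comm]

section Aux
variable {Ω : Type*} [MeasurableSpace Ω] {P : Measure Ω} {M : ℕ} {p : Fin M → ℝ}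
  {X : ℕ → Ω → ℤ}

lemma ERWpathEvent_measurable (h : ∀ n, Measurable (X n)) (n : ℕ) (w : ℕ → ℤ) :
    MeasurableSet {ω | ∀ m ≤ n, X m ω = w m} := by
  have : {ω | ∀ m ≤ n, X m ω = w m} = ⋂ m ∈ Set.Iic n, (X m) ⁻¹' {w m} := by
    ext ω; simp [Set.mem_iInter, Set.mem_Iic]
  rw [this]
  exact MeasurableSet.biInter (Set.to_countable _) fun m _ => (h m) (measurableSet_singleton _)

lemma ERWpath_prob_le [IsProbabilityMeasure P] (h : IsEARW P M p (1/2) X)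
    {q : ℝ} (hq1 : ∀ j, cookieSeq M p (1/2) j ≤ q)
    (hq0 : ∀ j, (1/2:ℝ) ≤ cookieSeq M p (1/2) j)
    (n : ℕ) (w : ℕ → ℤ) :
    P {ω | ∀ m ≤ n, X m ω = w m}
      ≤ ∏ k ∈ Finset.range n,
          (if w (k+1) = w k + 1 then ENNReal.ofReal q else ENNReal.ofReal (1/2)) := by
  induction n with
  | zero => simpa using prob_le_one
  | succ n ih =>
    have e1 : {ω | ∀ m : Fin (n+1), X m ω = w m} = {ω | ∀ m ≤ n, X m ω = w m} := by
      ext ω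
      constructor
      · intro hh m hm; exact hh ⟨m, Nat.lt_succ_of_le hm⟩
      · intro hh m; exact hh m (Nat.lt_succ_iff.mp m.isLt)
    obtain ⟨c, hc1, hc2, hcond⟩ :
        ∃ c : ℝ, 1/2 ≤ c ∧ c ≤ q ∧
          P ({ω | X (n + 1) ω = w n + 1} ∩ {ω | ∀ m ≤ n, X m ω = w m})
            = ENNReal.ofReal c * P {ω | ∀ m ≤ n, X m ω = w m} := by
      have hcd := h.cond n (fun m : Fin (n+1) => w ↑m)
      simp only [Fin.val_last] at hcd
      rw [e1] at hcd
      exact ⟨_, hq0 _, hq1 _, hcd⟩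
    set B := {ω | ∀ m ≤ n, X m ω = w m} with hB
    set A := {ω | ∀ m ≤ n+1, X m ω = w m} with hA
    have hAB : A = {ω | X (n+1) ω = w (n+1)} ∩ B := by
      ext ω
      simp only [hA, hB, Set.mem_setOf_eq, Set.mem_inter_iff]
      constructor
      · intro hh; exact ⟨hh (n+1) le_rfl, fun m hm => hh m (hm.trans (Nat.le_succ n))⟩
      · rintro ⟨h1, h2⟩ m hm
        rcases Nat.eq_or_lt_of_le hm with rfl | hlt
        · exact h1
        · exact h2 m (Nat.lt_succ_iff.mp hlt)
    have hnX : ∀ ω ∈ B, X n ω = w n := fun ω hω => hω n le_rfl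
    by_cases hup : w (n+1) = w n + 1
    · have hAU : A = {ω | X (n+1) ω = w n + 1} ∩ B := by rw [hAB, hup]
      rw [hAU, hcond, Finset.prod_range_succ, if_pos hup]
      calc ENNReal.ofReal c * P B = P B * ENNReal.ofReal c := mul_comm _ _
        _ ≤ _ := mul_le_mul' ih (ENNReal.ofReal_le_ofReal hc2)
    · by_cases hdn : w (n+1) = w n - 1
      · set U := {ω | X (n+1) ω = w n + 1} ∩ B with hU
        have hAD : A = {ω | X (n+1) ω = w n - 1} ∩ B := by rw [hAB, hdn]
        have hdisj : Disjoint U A := by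
          rw [hU, hAD]
          refine Set.disjoint_left.mpr ?_
          rintro ω ⟨h1, -⟩ ⟨h2, -⟩
          simp only [Set.mem_setOf_eq] at h1 h2
          omega
        have hAmeas : MeasurableSet A :=
          ERWpathEvent_measurable h.measurable (n+1) w
        have hsplit : B = U ∪ A := by
          ext ω
          constructor
          · intro hω
            have hstep := h.steps ω n
            have hXn := hnX ω hω
            rcases (abs_eq (by norm_num : (0:ℤ) ≤ 1)).mp hstep with h' | h'
            · left; exact ⟨by simp only [Set.mem_setOf_eq]; omega, hω⟩
            · right
              rw [hAD]
              exact ⟨by simp only [Set.mem_setOf_eq]; omega, hω⟩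
          · rintro (⟨-, hω⟩ | hω)
            · exact hω
            · rw [hAD] at hω; exact hω.2
        have hPB : P U + P A = P B := by rw [← measure_union hdisj hAmeas, ← hsplit]
        have hfin : ENNReal.ofReal (1/2) * P B ≠ ⊤ :=
          ENNReal.mul_ne_top ENNReal.ofReal_ne_top (measure_ne_top P B)
        have hUge : ENNReal.ofReal (1/2) * P B ≤ P U := by
          rw [hU, hcond]
          exact mul_le_mul_left (ENNReal.ofReal_le_ofReal hc1) _
        have hhalfsum : ENNReal.ofReal (1/2) * P B + ENNReal.ofReal (1/2) * P B = P B := by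
          rw [← add_mul, ← ENNReal.ofReal_add (by norm_num) (by norm_num)]
          norm_num
        have hPA : P A ≤ ENNReal.ofReal (1/2) * P B := by
          have key : P A + ENNReal.ofReal (1/2) * P B ≤ P B :=
            calc P A + ENNReal.ofReal (1/2) * P B ≤ P A + P U := add_le_add_right hUge _
              _ = P B := by rw [add_comm, hPB]
          have key2 : P A + ENNReal.ofReal (1/2) * P B
              ≤ ENNReal.ofReal (1/2) * P B + ENNReal.ofReal (1/2) * P B :=
            key.trans_eq hhalfsum.symm
          exact (ENNReal.add_le_add_iff_right hfin).mp key2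
        calc P A ≤ ENNReal.ofReal (1/2) * P B := hPA
          _ ≤ ENNReal.ofReal (1/2) * ∏ k ∈ Finset.range n,
                (if w (k+1) = w k + 1 then ENNReal.ofReal q else ENNReal.ofReal (1/2)) :=
            mul_le_mul_right ih _
          _ = _ := by rw [Finset.prod_range_succ, if_neg hup, mul_comm]
      · have hempty : A = ∅ := by
          ext ω
          simp only [Set.mem_empty_iff_false, iff_false]
          intro hω
          have hstep := h.steps ω n
          have h1 : X (n+1) ω = w (n+1) := hω (n+1) le_rfl
          have h2 : X n ω = w n := hω n (Nat.le_succ n)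
          rcases (abs_eq (by norm_num : (0:ℤ) ≤ 1)).mp hstep with h' | h'
          · exact hup (by omega)
          · exact hdn (by omega)
        rw [hempty]
        simp

lemma ERWlower {p₀ : ℝ} (h : IsEARW P M p p₀ X) (ω : Ω) : ∀ n : ℕ, -(n:ℤ) ≤ X n ω := by
  intro n
  induction n with
  | zero => simp [h.init ω]
  | succ n ih =>
    have hstep := h.steps ω n
    rcases (abs_eq (by norm_num : (0:ℤ) ≤ 1)).mp hstep with h' | h' <;> push_cast <;> omega

open scoped Classical in
lemma ERWevent_subset (h : IsEARW P M p (1/2) X) (n : ℕ) (a : ℝ) :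
    {ω | a ≤ ((X n ω : ℤ) : ℝ)} ⊆
      ⋃ s ∈ Finset.univ.filter (fun s : Fin n → Bool => a ≤ ((ERWpw n s n : ℤ) : ℝ)),
        {ω | ∀ m ≤ n, X m ω = ERWpw n s m} := by
  intro ω hω
  set s : Fin n → Bool := fun k => decide (X (k.1+1) ω = X k.1 ω + 1) with hs
  have key : ∀ m, m ≤ n → X m ω = ERWpw n s m := by
    intro m
    induction m with
    | zero => intro _; simpa [ERWpw] using h.init ω
    | succ m ihm =>
      intro hm1
      have hm : m < n := hm1
      have hXm := ihm (Nat.le_of_lt hm)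
      have hstep := h.steps ω m
      have hpw : ERWpw n s (m+1) = ERWpw n s m + ERWstp n s m := Finset.sum_range_succ _ _
      rw [hpw, ← hXm]
      rw [ERWstp, dif_pos hm]
      rcases (abs_eq (by norm_num : (0:ℤ) ≤ 1)).mp hstep with h' | h'
      · have hst : s ⟨m, hm⟩ = true := by simp only [hs, decide_eq_true_eq]; omega
        rw [hst]; simp only [if_pos]; omega
      · have hst : s ⟨m, hm⟩ = false := by simp only [hs, decide_eq_false_iff_not]; omega
        rw [hst]; simp only [Bool.false_eq_true, if_false]; omega
  refine Set.mem_iUnion₂.mpr ⟨s, ?_, fun m hm => key m hm⟩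
  simp only [Finset.mem_filter, Finset.mem_univ, true_and]
  rw [← key n le_rfl]
  exact hω

open scoped Classical in
lemma ERWprob_event_le [IsProbabilityMeasure P] (h : IsEARW P M p (1/2) X)
    {q x ε' : ℝ} (hq : (1:ℝ)/2 ≤ q)
    (hc1 : ∀ j, cookieSeq M p (1/2) j ≤ q) (hc0 : ∀ j, (1:ℝ)/2 ≤ cookieSeq M p (1/2) j)
    (hx : 1 < x) (n : ℕ) :
    P {ω | ε' * n ≤ ((X n ω : ℤ) : ℝ)}
      ≤ ENNReal.ofReal (((q * x + 1/(2*x)) * x ^ (-ε')) ^ n) := by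
  have hq0 : (0:ℝ) ≤ q := le_trans (by norm_num) hq
  calc P {ω | ε' * n ≤ ((X n ω : ℤ) : ℝ)}
      ≤ P (⋃ s ∈ Finset.univ.filter
            (fun s : Fin n → Bool => ε' * n ≤ ((ERWpw n s n : ℤ) : ℝ)),
          {ω | ∀ m ≤ n, X m ω = ERWpw n s m}) := measure_mono (ERWevent_subset h n _)
    _ ≤ ∑ s ∈ Finset.univ.filter
            (fun s : Fin n → Bool => ε' * n ≤ ((ERWpw n s n : ℤ) : ℝ)),
          P {ω | ∀ m ≤ n, X m ω = ERWpw n s m} := measure_biUnion_finset_le _ _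
    _ ≤ ∑ s ∈ Finset.univ.filter
            (fun s : Fin n → Bool => ε' * n ≤ ((ERWpw n s n : ℤ) : ℝ)),
          ENNReal.ofReal (∏ i : Fin n, ERWrc q (s i)) := by
        refine Finset.sum_le_sum fun s _ => ?_
        refine (ERWpath_prob_le h hc1 hc0 n (ERWpw n s)).trans ?_
        rw [ERWprod_cost_eq hq0 n s]
    _ ≤ _ := ERWcount_bound hq hx n

end Aux

/-- **Arbitrarily large `δ` with arbitrarily small speed.**
For every `η > 0` and `ε > 0` there exist `M ≥ 3` and `p ∈ (0,1)^M` with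
`δ(M,p) > η` and `δ(M,p) > 2`, such that any standard excited random walk with `M`
cookies and cookie vector `p` satisfies `limsup Y n / n < ε` almost surely. -/
theorem large_delta_small_speed (η ε : ℝ) (hη : 0 < η) (hε : 0 < ε) :
    ∃ M : ℕ, 3 ≤ M ∧ ∃ p : Fin M → ℝ,
      (∀ i, p i ∈ Set.Ioo (0 : ℝ) 1)
      ∧ η < ∑ i, (2 * p i - 1)
      ∧ 2 < ∑ i, (2 * p i - 1)
      ∧ ∀ (Ω : Type) [MeasurableSpace Ω] (P : Measure Ω) [IsProbabilityMeasure P]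
          (Y : ℕ → Ω → ℤ), IsEARW P M p (1 / 2) Y →
          ∀ᵐ ω ∂P, Filter.limsup (fun n : ℕ => (Y n ω : ℝ) / n) atTop < ε := by
  classical
  set ε' : ℝ := min ε 1 / 2 with hε'def
  have hmin0 : 0 < min ε 1 := lt_min hε one_pos
  have hε'0 : 0 < ε' := by rw [hε'def]; linarith
  have hε'lt : ε' < ε := by
    have h1 : min ε 1 ≤ ε := min_le_left _ _
    rw [hε'def]; linarith
  set x : ℝ := 1 + ε' with hxdef
  have hx : 1 < x := by rw [hxdef]; linarith
  have hx0 : (0:ℝ) < x := lt_trans one_pos hx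
  set Δ0 : ℝ := ε'^2 / (2*(1+ε')) with hΔ0
  have hΔ0pos : 0 < Δ0 := by rw [hΔ0]; positivity
  -- the analytic gap estimate
  have hgap : (x^2 + 1)/(2*x) + Δ0 ≤ x ^ (ε' : ℝ) := by
    have hlog : ε' / (1+ε') ≤ Real.log x := by
      have h1 := Real.one_sub_inv_le_log_of_pos hx0
      have hinv : 1 - x⁻¹ = ε' / (1+ε') := by
        rw [hxdef]; field_simp; ring
      linarith [hinv ▸ h1]
    have hrpow : 1 + ε' * (ε'/(1+ε')) ≤ x ^ (ε':ℝ) := by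
      rw [Real.rpow_def_of_pos hx0, mul_comm (Real.log x) ε']
      have h2 := Real.add_one_le_exp (ε' * Real.log x)
      have hmul : ε' * (ε'/(1+ε')) ≤ ε' * Real.log x :=
        mul_le_mul_of_nonneg_left hlog hε'0.le
      linarith
    have hlhs : (x^2 + 1)/(2*x) = 1 + ε'^2/(2*(1+ε')) := by
      rw [hxdef]; field_simp; ring
    have hsq : ε' * (ε'/(1+ε')) = ε'^2/(1+ε') := by
      field_simp
    have hhalf : ε'^2/(2*(1+ε')) + ε'^2/(2*(1+ε')) = ε'^2/(1+ε') := by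
      field_simp; ring
    rw [hlhs, hΔ0]
    rw [hsq] at hrpow
    linarith
  set δ0 : ℝ := max η 2 + 1 with hδ0
  have hδ03 : 3 ≤ δ0 := by
    have : (2:ℝ) ≤ max η 2 := le_max_right _ _
    rw [hδ0]; linarith
  have hδ0pos : 0 < δ0 := by linarith
  obtain ⟨M, hM⟩ := exists_nat_gt (max (max 3 δ0) (δ0 * x / Δ0))
  have hM3 : (3:ℝ) < M := lt_of_le_of_lt ((le_max_left 3 δ0).trans (le_max_left _ _)) hM
  have hMδ : δ0 < M := lt_of_le_of_lt ((le_max_right 3 δ0).trans (le_max_left _ _)) hM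
  have hMΔ : δ0 * x / Δ0 < M := lt_of_le_of_lt (le_max_right _ _) hM
  have hM0 : (0:ℝ) < M := lt_trans (by norm_num) hM3
  set β : ℝ := δ0 / (2*M) with hβ
  have hβpos : 0 < β := by rw [hβ]; positivity
  have hβhalf : β < 1/2 := by
    rw [hβ, div_lt_iff₀ (by positivity)]
    linarith
  set q : ℝ := 1/2 + β with hqdef
  have hq : (1:ℝ)/2 ≤ q := by rw [hqdef]; linarith
  have hq1 : q < 1 := by rw [hqdef]; linarith
  have hq0 : 0 < q := by rw [hqdef]; linarith
  have hβx : β * x < Δ0 := by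
    have h1 : δ0 * x < M * Δ0 := by
      rw [div_lt_iff₀ hΔ0pos] at hMΔ
      exact hMΔ
    have h2 : β * x = δ0 * x / (2*M) := by rw [hβ]; ring
    rw [h2, div_lt_iff₀ (by positivity)]
    nlinarith [hΔ0pos, hM0]
  refine ⟨M, ?_, fun _ => q, ?_, ?_, ?_, ?_⟩
  · exact_mod_cast hM3.le
  · intro i; exact ⟨hq0, hq1⟩
  · have hsum : ∑ i : Fin M, (2 * q - 1) = δ0 := by
      rw [Finset.sum_const, Finset.card_univ, Fintype.card_fin, nsmul_eq_mul]
      rw [hqdef, hβ]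
      field_simp
      ring
    rw [hsum, hδ0]
    have : η ≤ max η 2 := le_max_left _ _
    linarith
  · have hsum : ∑ i : Fin M, (2 * q - 1) = δ0 := by
      rw [Finset.sum_const, Finset.card_univ, Fintype.card_fin, nsmul_eq_mul]
      rw [hqdef, hβ]
      field_simp
      ring
    rw [hsum, hδ0]
    have : (2:ℝ) ≤ max η 2 := le_max_right _ _
    linarith
  · intro Ω _ P _ Y hY
    set ρ : ℝ := (q * x + 1/(2*x)) * x ^ (-ε') with hρ
    have hρ0 : 0 ≤ ρ := by
      rw [hρ]
      have := Real.rpow_nonneg hx0.le (-ε')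
      positivity
    have hρ1 : ρ < 1 := by
      have e1 : q * x + 1/(2*x) = (x^2+1)/(2*x) + β * x := by
        rw [hqdef]; field_simp; ring
      have h2 : q * x + 1/(2*x) < x ^ (ε':ℝ) := by
        rw [e1]
        calc (x^2+1)/(2*x) + β * x < (x^2+1)/(2*x) + Δ0 := add_lt_add_right hβx _
          _ ≤ x ^ (ε':ℝ) := hgap
      calc ρ < x ^ (ε':ℝ) * x ^ (-ε') :=
            mul_lt_mul_of_pos_right h2 (Real.rpow_pos_of_pos hx0 _)
        _ = 1 := by rw [← Real.rpow_add hx0]; simp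
    have hcookie_le : ∀ j, cookieSeq M (fun _ => q) (1/2) j ≤ q := by
      intro j; rw [cookieSeq]; split
      · exact le_rfl
      · linarith
    have hcookie_ge : ∀ j, (1:ℝ)/2 ≤ cookieSeq M (fun _ => q) (1/2) j := by
      intro j; rw [cookieSeq]; split
      · exact hq
      · exact le_rfl
    have hP : ∀ n : ℕ, P {ω | ε' * n ≤ ((Y n ω : ℤ) : ℝ)} ≤ ENNReal.ofReal ρ ^ n := by
      intro n
      have := ERWprob_event_le hY hq hcookie_le hcookie_ge hx (ε' := ε') n
      rw [← hρ] at this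
      rw [← ENNReal.ofReal_pow hρ0]
      exact this
    have htsum : (∑' n : ℕ, P {ω | ε' * n ≤ ((Y n ω : ℤ) : ℝ)}) ≠ ⊤ := by
      refine ne_top_of_le_ne_top ?_ (ENNReal.tsum_le_tsum hP)
      rw [ENNReal.tsum_geometric]
      refine ENNReal.inv_ne_top.mpr ?_
      have : ENNReal.ofReal ρ < 1 := ENNReal.ofReal_lt_one.mpr hρ1
      exact (tsub_pos_of_lt this).ne'
    have hae := MeasureTheory.ae_eventually_notMem htsum
    filter_upwards [hae] with ω hω
    have hev : ∀ᶠ n : ℕ in atTop, (Y n ω : ℝ) / n ≤ ε' := by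
      filter_upwards [hω, eventually_ge_atTop 1] with n hn hn1
      simp only [Set.mem_setOf_eq, not_le] at hn
      have hnpos : (0:ℝ) < n := by exact_mod_cast hn1
      rw [div_le_iff₀ hnpos]
      have : ε' * n ≤ ε' * n := le_rfl
      linarith [hn]
    have hlb : ∀ᶠ n : ℕ in atTop, (-1:ℝ) ≤ (Y n ω : ℝ) / n := by
      filter_upwards [eventually_ge_atTop 1] with n hn1
      have hnpos : (0:ℝ) < n := by exact_mod_cast hn1
      rw [le_div_iff₀ hnpos]
      have hint := ERWlower hY ω n
      have : -(n:ℝ) ≤ (Y n ω : ℝ) := by exact_mod_cast hint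
      linarith
    have hcb : IsCoboundedUnder (· ≤ ·) atTop (fun n : ℕ => (Y n ω : ℝ) / n) :=
      isCoboundedUnder_le_of_eventually_le atTop hlb
    exact lt_of_le_of_lt (limsup_le_of_le hcb hev) hε'lt
end

section
/- Let 5/6 < q < p < 1 and set f(q) = (6q−5)(q²−2q−1)/(24q⁴−42q³−3q²+28q−9). Suppose the standard excited random walk (Y^q_n)_{n≥0} with cookie vector (q,q,q) satisfies liminf_{n→∞} Y^q_n / n ≥ f(q) almost surely. For i ∈ ℕ let p^{(i)} = 1/2 + 3(2p−1)/(2(3+i)) and p_i = (p^{(i)},…,p^{(i)}) ∈ (0,1)^{3+i}, and let (Y^{p_i}_n)_{n≥0} be the standard excited random walk with cookie vector p_i. Then there exists N ∈ ℕ such that for all i > N: δ(3,(q,q,q)) < δ(3+i, p_i), and almost surely limsup_{n→∞} Y^{p_i}_n / n < f(q) ≤ liminf_{n→∞} Y^q_n / n. -/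
open MeasureTheory ProbabilityTheory Filter Topology
open scoped ENNReal NNReal

namespace ERWAux

open Finset

/-- partial sums of `±1` steps encoded by booleans -/
def Wk (s : ℕ → Bool) : ℕ → ℤ
  | 0 => 0
  | n+1 => Wk s n + (if s n then 1 else -1)

/-- number of up-steps before time `n` -/
def U (s : ℕ → Bool) (n : ℕ) : ℕ := ((Finset.range n).filter fun j => s j = true).card

lemma U_le (s : ℕ → Bool) (n : ℕ) : U s n ≤ n := by
  simpa [U] using Finset.card_filter_le (Finset.range n) (fun j => s j = true)

lemma U_succ (s : ℕ → Bool) (n : ℕ) :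
    U s (n+1) = U s n + if s n = true then 1 else 0 := by
  unfold U
  rw [Finset.range_add_one, Finset.filter_insert]
  split_ifs with h
  · rw [Finset.card_insert_of_notMem (by simp)]
  · simp

lemma Wk_eq (s : ℕ → Bool) (n : ℕ) : Wk s n = 2 * (U s n : ℤ) - n := by
  induction n with
  | zero => simp [Wk, U]
  | succ n ih =>
    rw [Wk, U_succ, ih]
    by_cases h : s n = true <;> simp [h] <;> push_cast <;> ring

variable {Ω : Type*} [MeasurableSpace Ω]

def pathE (X : ℕ → Ω → ℤ) (s : ℕ → Bool) (n : ℕ) : Set Ω := {ω | ∀ m ≤ n, X m ω = Wk s m}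

lemma measurableSet_pathE {X : ℕ → Ω → ℤ} (hX : ∀ n, Measurable (X n)) (s : ℕ → Bool) (n : ℕ) :
    MeasurableSet (pathE X s n) := by
  have h : pathE X s n = ⋂ m ∈ Set.Iic n, X m ⁻¹' {Wk s m} := by
    ext ω; simp [pathE, Set.mem_iInter]
  rw [h]
  exact MeasurableSet.biInter (Set.to_countable _)
    fun m _ => (hX m) (measurableSet_singleton _)
lemma prob_pathE_le {P : Measure Ω} [IsProbabilityMeasure P]
    {M : ℕ} {p : Fin M → ℝ} {X : ℕ → Ω → ℤ} (h : IsEARW P M p (1/2) X)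
    {r : ℝ} (hr0 : (1:ℝ)/2 ≤ r) (hpb : ∀ j, p j ≤ r) (hpb0 : ∀ j, (1:ℝ)/2 ≤ p j)
    (s : ℕ → Bool) (n : ℕ) :
    P (pathE X s n) ≤ (ENNReal.ofReal r) ^ (U s n) * (ENNReal.ofReal (1/2)) ^ (n - U s n) := by
  induction n with
  | zero =>
      have h0 : pathE X s 0 = Set.univ := by
        ext ω
        simp only [pathE, Set.mem_setOf_eq, Set.mem_univ, iff_true]
        intro m hm
        interval_cases m
        simpa [Wk] using h.init ω
      simp [h0, U]
  | succ n ih =>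
      set w : Fin (n+1) → ℤ := fun m => Wk s m.val with hw
      have hEfin : {ω | ∀ m : Fin (n+1), X m ω = w m} = pathE X s n := by
        ext ω
        constructor
        · intro H m hm; exact H ⟨m, Nat.lt_succ_of_le hm⟩
        · intro H m; exact H m.val (Nat.lt_succ_iff.mp m.isLt)
      have hlast : w (Fin.last n) = Wk s n := by simp [hw]
      set c : ℝ := cookieSeq M p (1/2)
        ((Finset.univ.filter fun m : Fin (n+1) => w m = w (Fin.last n)).card - 1) with hc
      have hcl : 1/2 ≤ c ∧ c ≤ r := by
        rw [hc]; unfold cookieSeq; split_ifs with hj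
        · exact ⟨hpb0 _, hpb _⟩
        · exact ⟨le_refl _, hr0⟩
      have hcond := h.cond n w
      rw [hEfin, hlast] at hcond
      set A := {ω | X (n+1) ω = Wk s n + 1} ∩ pathE X s n with hA
      set B := {ω | X (n+1) ω = Wk s n - 1} ∩ pathE X s n with hB
      have hsub : pathE X s n ⊆ A ∪ B := by
        intro ω hω
        have hx : X n ω = Wk s n := hω n le_rfl
        have hstep := h.steps ω n
        rcases (abs_eq (by norm_num : (0:ℤ) ≤ 1)).mp hstep with h1 | h1
        · exact Or.inl ⟨show X (n+1) ω = Wk s n + 1 by omega, hω⟩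
        · exact Or.inr ⟨show X (n+1) ω = Wk s n - 1 by omega, hω⟩
      have hAB : A ∪ B = pathE X s n := by
        apply Set.Subset.antisymm
        · intro ω hω; rcases hω with h' | h' <;> exact h'.2
        · exact hsub
      have hdisj : Disjoint A B := by
        apply Set.disjoint_left.mpr
        rintro ω ⟨h1, -⟩ ⟨h2, -⟩
        simp only [Set.mem_setOf_eq] at h1 h2
        omega
      have hmesB : MeasurableSet B := by
        apply MeasurableSet.inter
        · exact (h.measurable (n+1)) (measurableSet_singleton _)
        · exact measurableSet_pathE h.measurable s n
      have hsum' : P A + P B = P (pathE X s n) := by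
        rw [← measure_union hdisj hmesB, hAB]
      have hPA : P A = ENNReal.ofReal c * P (pathE X s n) := hcond
      by_cases hs : s n = true
      · -- up step
        have hEsucc : pathE X s (n+1) = A := by
          ext ω
          constructor
          · intro H
            refine ⟨?_, fun m hm => H m (le_trans hm (Nat.le_succ n))⟩
            have hx := H (n+1) le_rfl
            simp only [Set.mem_setOf_eq]
            rw [hx]; simp [Wk, hs, sub_eq_add_neg]
          · rintro ⟨h1, h2⟩ m hm
            rcases Nat.lt_succ_iff_lt_or_eq.mp (Nat.lt_succ_of_le hm) with hm' | hm'
            · exact h2 m (Nat.lt_succ_iff.mp hm')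
            · subst hm'
              simp only [Set.mem_setOf_eq] at h1
              rw [h1]; simp [Wk, hs, sub_eq_add_neg]
        rw [hEsucc, hPA, U_succ]
        simp only [hs, if_true]
        have he2 : n + 1 - (U s n + 1) = n - U s n := by omega
        rw [he2, pow_succ]
        calc ENNReal.ofReal c * P (pathE X s n)
            ≤ ENNReal.ofReal r * ((ENNReal.ofReal r) ^ (U s n) * (ENNReal.ofReal (1/2)) ^ (n - U s n)) :=
              mul_le_mul' (ENNReal.ofReal_le_ofReal hcl.2) ih
          _ = ENNReal.ofReal r ^ (U s n) * ENNReal.ofReal r * ENNReal.ofReal (1/2) ^ (n - U s n) := by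
              ring
      · -- down step
        have hEsucc : pathE X s (n+1) = B := by
          ext ω
          constructor
          · intro H
            refine ⟨?_, fun m hm => H m (le_trans hm (Nat.le_succ n))⟩
            have hx := H (n+1) le_rfl
            simp only [Set.mem_setOf_eq]
            rw [hx]; simp [Wk, hs, sub_eq_add_neg]
          · rintro ⟨h1, h2⟩ m hm
            rcases Nat.lt_succ_iff_lt_or_eq.mp (Nat.lt_succ_of_le hm) with hm' | hm'
            · exact h2 m (Nat.lt_succ_iff.mp hm')
            · subst hm'
              simp only [Set.mem_setOf_eq] at h1
              rw [h1]; simp [Wk, hs, sub_eq_add_neg]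
        have hPB : P B ≤ ENNReal.ofReal (1/2) * P (pathE X s n) := by
          have h2 : ENNReal.ofReal (1/2) * P (pathE X s n) ≤ P A := by
            rw [hPA]
            exact mul_le_mul' (ENNReal.ofReal_le_ofReal hcl.1) le_rfl
          have hht : ENNReal.ofReal (1/2) * P (pathE X s n) ≠ ⊤ :=
            ENNReal.mul_ne_top ENNReal.ofReal_ne_top (measure_ne_top P _)
          have hkey : ENNReal.ofReal (1/2) * P (pathE X s n) + P B
              ≤ ENNReal.ofReal (1/2) * P (pathE X s n) + ENNReal.ofReal (1/2) * P (pathE X s n) := by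
            calc ENNReal.ofReal (1/2) * P (pathE X s n) + P B ≤ P A + P B := by
                  exact add_le_add_left h2 _
              _ = P (pathE X s n) := hsum'
              _ = (ENNReal.ofReal (1/2) + ENNReal.ofReal (1/2)) * P (pathE X s n) := by
                  rw [← ENNReal.ofReal_add (by norm_num) (by norm_num)]
                  norm_num
              _ = ENNReal.ofReal (1/2) * P (pathE X s n) + ENNReal.ofReal (1/2) * P (pathE X s n) := by
                  rw [add_mul]
          exact (ENNReal.add_le_add_iff_left hht).mp hkey
        rw [hEsucc, U_succ]
        simp only [if_neg hs, Nat.add_zero]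
        have he2 : n + 1 - U s n = (n - U s n) + 1 := by
          have := U_le s n; omega
        rw [he2, pow_succ]
        calc P B ≤ ENNReal.ofReal (1/2) * P (pathE X s n) := hPB
          _ ≤ ENNReal.ofReal (1/2) * ((ENNReal.ofReal r) ^ (U s n) * (ENNReal.ofReal (1/2)) ^ (n - U s n)) :=
              mul_le_mul' le_rfl ih
          _ = ENNReal.ofReal r ^ U s n * (ENNReal.ofReal (1/2) ^ (n - U s n) * ENNReal.ofReal (1/2)) := by
              ring
/-- extension of a finite boolean word by `false` -/
def ext (n : ℕ) (t : Fin n → Bool) : ℕ → Bool := fun j => if h : j < n then t ⟨j, h⟩ else false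

lemma cover (X : ℕ → Ω → ℤ) (hinit : ∀ ω, X 0 ω = 0)
    (hsteps : ∀ ω n, |X (n+1) ω - X n ω| = 1) (n : ℕ) (k : ℤ) :
    {ω | k ≤ X n ω} ⊆
      ⋃ t ∈ (Finset.univ : Finset (Fin n → Bool)).filter
        (fun t => (n:ℤ) + k ≤ 2 * (U (ext n t) n : ℤ)), pathE X (ext n t) n := by
  intro ω hω
  classical
  set t : Fin n → Bool := fun j => decide (X (j.val+1) ω = X j.val ω + 1) with ht
  have key : ∀ m, m ≤ n → X m ω = Wk (ext n t) m := by
    intro m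
    induction m with
    | zero => intro _; simpa [Wk] using hinit ω
    | succ m ihm =>
      intro hm
      have hm' : m < n := hm
      have hx := ihm (le_of_lt hm')
      have hstep := hsteps ω m
      have hext : ext n t m = t ⟨m, hm'⟩ := by simp [ext, hm']
      rcases (abs_eq (by norm_num : (0:ℤ) ≤ 1)).mp hstep with h1 | h1
      · have htt : t ⟨m, hm'⟩ = true := by simp [ht]; omega
        show X (m+1) ω = Wk (ext n t) m + (if ext n t m then 1 else -1)
        rw [hext, htt, if_pos rfl]; omega
      · have htt : t ⟨m, hm'⟩ = false := by
          simp only [ht, decide_eq_false_iff_not]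
          omega
        show X (m+1) ω = Wk (ext n t) m + (if ext n t m then 1 else -1)
        rw [hext, htt, if_neg Bool.false_ne_true]; omega
  have hmem : ω ∈ pathE X (ext n t) n := fun m hm => key m hm
  have hXn : X n ω = 2 * (U (ext n t) n : ℤ) - n := by rw [key n le_rfl, Wk_eq]
  have hω' : k ≤ X n ω := hω
  have hQ : t ∈ (Finset.univ : Finset (Fin n → Bool)).filter
      (fun t => (n:ℤ) + k ≤ 2 * (U (ext n t) n : ℤ)) := by
    rw [Finset.mem_filter]
    exact ⟨Finset.mem_univ t, by omega⟩
  exact Set.mem_biUnion hQ hmem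

lemma U_ext (n : ℕ) (t : Fin n → Bool) :
    U (ext n t) n = (Finset.univ.filter fun j : Fin n => t j = true).card := by
  unfold U
  rw [Finset.card_filter, Finset.card_filter,
    ← Fin.sum_univ_eq_sum_range (fun j => if ext n t j = true then 1 else 0)]
  apply Finset.sum_congr rfl
  intro j _
  simp [ext, j.isLt]

lemma sum_pow (x y : ℝ≥0∞) (n : ℕ) :
    ∑ t : Fin n → Bool, x ^ (U (ext n t) n) * y ^ (n - U (ext n t) n) = (x + y) ^ n := by
  classical
  have h1 : ∀ t : Fin n → Bool,
      x ^ (U (ext n t) n) * y ^ (n - U (ext n t) n) = ∏ j : Fin n, (if t j then x else y) := by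
    intro t
    rw [Finset.prod_ite, Finset.prod_const, Finset.prod_const, U_ext]
    have hcard := Finset.card_filter_add_card_filter_not
      (s := (Finset.univ : Finset (Fin n))) (p := fun j : Fin n => t j = true)
    simp only [Finset.card_univ, Fintype.card_fin] at hcard
    congr 2
    omega
  simp_rw [h1]
  have h2 := (Finset.prod_univ_sum (fun _ : Fin n => (Finset.univ : Finset Bool))
    (fun _ b => if b then x else y)).symm
  rw [Fintype.piFinset_univ] at h2
  rw [h2]
  simp [add_comm]
lemma bad_bound {P : Measure Ω} [IsProbabilityMeasure P]
    {M : ℕ} {p : Fin M → ℝ} {X : ℕ → Ω → ℤ} (h : IsEARW P M p (1/2) X)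
    {r θ : ℝ} (hr0 : (1:ℝ)/2 ≤ r) (hθ : 1 ≤ θ)
    (hpb : ∀ j, p j ≤ r) (hpb0 : ∀ j, (1:ℝ)/2 ≤ p j) (n k : ℕ) :
    P {ω | ((n:ℤ) + k) ≤ X n ω + n} ≤
      ENNReal.ofReal ((θ^2 * r + 1/2)^n / θ^(n+k)) := by
  classical
  have hθ0 : (0:ℝ) < θ := lt_of_lt_of_le one_pos hθ
  have hr0' : (0:ℝ) ≤ r := le_trans (by norm_num) hr0
  set Θ := ENNReal.ofReal θ with hΘ
  set R := ENNReal.ofReal r with hR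
  set H := ENNReal.ofReal (1/2) with hH
  have hΘ1 : 1 ≤ Θ := by
    rw [hΘ, ← ENNReal.ofReal_one]
    exact ENNReal.ofReal_le_ofReal hθ
  have hΘtop : Θ^(n+k) ≠ ⊤ := by
    rw [hΘ]; exact ENNReal.pow_ne_top ENNReal.ofReal_ne_top
  have hΘ0 : Θ^(n+k) ≠ 0 := by
    apply pow_ne_zero
    rw [hΘ]
    simp only [ne_eq, ENNReal.ofReal_eq_zero, not_le]
    exact hθ0
  have hset : {ω | ((n:ℤ) + k) ≤ X n ω + n} = {ω | ((k:ℤ)) ≤ X n ω} := by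
    ext ω; simp only [Set.mem_setOf_eq]; omega
  rw [hset]
  calc P {ω | ((k:ℤ)) ≤ X n ω}
      ≤ P (⋃ t ∈ (Finset.univ : Finset (Fin n → Bool)).filter
          (fun t => (n:ℤ) + k ≤ 2 * (U (ext n t) n : ℤ)), pathE X (ext n t) n) :=
        measure_mono (cover X h.init h.steps n k)
    _ ≤ ∑ t ∈ (Finset.univ : Finset (Fin n → Bool)).filter
          (fun t => (n:ℤ) + k ≤ 2 * (U (ext n t) n : ℤ)), P (pathE X (ext n t) n) :=
        measure_biUnion_finset_le _ _
    _ ≤ ∑ t ∈ (Finset.univ : Finset (Fin n → Bool)).filter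
          (fun t => (n:ℤ) + k ≤ 2 * (U (ext n t) n : ℤ)),
          ((Θ^2 * R) ^ (U (ext n t) n) * H ^ (n - U (ext n t) n)) / Θ^(n+k) := by
        apply Finset.sum_le_sum
        intro t ht
        rw [Finset.mem_filter] at ht
        have hcard : n + k ≤ 2 * U (ext n t) n := by
          have := ht.2; omega
        have hΘle : Θ^(n+k) ≤ Θ^(2 * U (ext n t) n) := pow_le_pow_right₀ hΘ1 hcard
        rw [ENNReal.le_div_iff_mul_le (Or.inl hΘ0) (Or.inl hΘtop)]
        calc P (pathE X (ext n t) n) * Θ^(n+k)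
            ≤ (R ^ (U (ext n t) n) * H ^ (n - U (ext n t) n)) * Θ^(2 * U (ext n t) n) :=
              mul_le_mul' (prob_pathE_le h hr0 hpb hpb0 _ n) hΘle
          _ = (Θ^2 * R) ^ (U (ext n t) n) * H ^ (n - U (ext n t) n) := by
              rw [mul_pow, pow_mul]
              ring
    _ ≤ ∑ t : Fin n → Bool,
          ((Θ^2 * R) ^ (U (ext n t) n) * H ^ (n - U (ext n t) n)) / Θ^(n+k) :=
        Finset.sum_le_sum_of_subset (Finset.filter_subset _ _)
    _ = (∑ t : Fin n → Bool,
          (Θ^2 * R) ^ (U (ext n t) n) * H ^ (n - U (ext n t) n)) / Θ^(n+k) := by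
        simp_rw [ENNReal.div_eq_inv_mul]
        rw [← Finset.mul_sum]
    _ = (Θ^2 * R + H) ^ n / Θ^(n+k) := by rw [sum_pow]
    _ = ENNReal.ofReal ((θ^2 * r + 1/2)^n / θ^(n+k)) := by
        have h1 : Θ^2 * R + H = ENNReal.ofReal (θ^2 * r + 1/2) := by
          rw [hΘ, hR, hH, ← ENNReal.ofReal_pow (le_of_lt hθ0),
            ← ENNReal.ofReal_mul (by positivity), ← ENNReal.ofReal_add (by positivity) (by norm_num)]
        rw [h1, ← ENNReal.ofReal_pow (by positivity), hΘ,
          ← ENNReal.ofReal_pow (le_of_lt hθ0),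
          ← ENNReal.ofReal_div_of_pos (by positivity)]
lemma log_ge (a : ℝ) (ha : 0 < a) (ha2 : a ≤ 1/2) : 2/3 * a ≤ Real.log (1+a) := by
  have hθ : (0:ℝ) < 1 + a := by linarith
  have h1 : Real.log (1+a)⁻¹ ≤ (1+a)⁻¹ - 1 :=
    Real.log_le_sub_one_of_pos (by positivity)
  rw [Real.log_inv] at h1
  have h2 : 1 - (1+a)⁻¹ ≤ Real.log (1+a) := by linarith
  have h3 : 1 - (1+a)⁻¹ = a / (1+a) := by field_simp; ring
  have h4 : 2/3 * a ≤ a / (1+a) := by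
    rw [le_div_iff₀ hθ]
    nlinarith [mul_nonneg ha.le (by linarith : (0:ℝ) ≤ 1/2 - a)]
  linarith

lemma pow_ceil (a : ℝ) (ha : 0 < a) (ha2 : a ≤ 1/2) (n k : ℕ) (hk : a * n ≤ k) :
    (1 + 2/3*a^2)^n ≤ (1+a)^k := by
  have hθ : (0:ℝ) < 1 + a := by linarith
  have hG : (0:ℝ) < 1 + 2/3*a^2 := by positivity
  have hlog1 : 2/3*a ≤ Real.log (1+a) := log_ge a ha ha2
  have hlog2 : Real.log (1 + 2/3*a^2) ≤ 2/3*a^2 := by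
    have := Real.log_le_sub_one_of_pos hG
    linarith
  have e1 : (1 + 2/3*a^2)^n = Real.exp ((n:ℝ) * Real.log (1+2/3*a^2)) := by
    rw [Real.exp_nat_mul, Real.exp_log hG]
  have e2 : (1+a)^k = Real.exp ((k:ℝ) * Real.log (1+a)) := by
    rw [Real.exp_nat_mul, Real.exp_log hθ]
  rw [e1, e2]
  apply Real.exp_le_exp.mpr
  have h1 : (n:ℝ) * Real.log (1+2/3*a^2) ≤ (n:ℝ) * (2/3*a^2) :=
    mul_le_mul_of_nonneg_left hlog2 (Nat.cast_nonneg n)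
  have h2 : (n:ℝ) * (2/3*a^2) = (a*n) * (2/3*a) := by ring
  have h3 : (a*(n:ℝ)) * (2/3*a) ≤ (k:ℝ) * (2/3*a) :=
    mul_le_mul_of_nonneg_right hk (by linarith)
  have h4 : (k:ℝ) * (2/3*a) ≤ (k:ℝ) * Real.log (1+a) :=
    mul_le_mul_of_nonneg_left hlog1 (Nat.cast_nonneg k)
  linarith

lemma rho_lt_one (a : ℝ) (ha : 0 < a) (ha2 : a ≤ 1/2) :
    ((1+a)^2*(1/2 + a^2/16) + 1/2) / ((1+a)*(1 + 2/3*a^2)) < 1 := by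
  rw [div_lt_one (by positivity)]
  nlinarith [sq_nonneg a, mul_pos ha ha, mul_pos (mul_pos ha ha) ha,
    mul_pos (mul_pos (mul_pos ha ha) ha) ha]

lemma real_bound (a : ℝ) (ha : 0 < a) (ha2 : a ≤ 1/2) (r : ℝ) (hr2 : 0 ≤ r)
    (hr : r ≤ 1/2 + a^2/16) (n k : ℕ) (hk : a * n ≤ k) :
    ((1+a)^2 * r + 1/2)^n / (1+a)^(n+k) ≤
      (((1+a)^2*(1/2 + a^2/16) + 1/2) / ((1+a)*(1 + 2/3*a^2)))^n := by
  have hθ : (0:ℝ) < 1 + a := by linarith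
  have hG : (0:ℝ) < 1 + 2/3*a^2 := by positivity
  have hnum : ((1+a)^2 * r + 1/2)^n ≤ ((1+a)^2*(1/2 + a^2/16) + 1/2)^n := by
    apply pow_le_pow_left₀ (by positivity)
    nlinarith [sq_nonneg (1+a)]
  have hden : ((1+a)*(1 + 2/3*a^2))^n ≤ (1+a)^(n+k) := by
    rw [mul_pow, pow_add]
    exact mul_le_mul_of_nonneg_left (pow_ceil a ha ha2 n k hk) (by positivity)
  rw [div_pow]
  apply div_le_div₀ (by positivity) hnum (by positivity) hden
lemma abs_X_le {X : ℕ → Ω → ℤ} (hinit : ∀ ω, X 0 ω = 0)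
    (hsteps : ∀ ω n, |X (n+1) ω - X n ω| = 1) (ω : Ω) : ∀ n, |X n ω| ≤ n := by
  intro n
  induction n with
  | zero => simp [hinit ω]
  | succ n ih =>
    have h1 := hsteps ω n
    rcases (abs_eq (by norm_num : (0:ℤ) ≤ 1)).mp h1 with h2 | h2 <;>
      rw [abs_le] at * <;> omega

lemma ae_limsup_le {P : Measure Ω} [IsProbabilityMeasure P]
    {M : ℕ} {p : Fin M → ℝ} {X : ℕ → Ω → ℤ} (h : IsEARW P M p (1/2) X)
    {a : ℝ} (ha : 0 < a) (ha2 : a ≤ 1/2)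
    (hpb : ∀ j, p j ≤ 1/2 + a^2/16) (hpb0 : ∀ j, (1:ℝ)/2 ≤ p j) :
    ∀ᵐ ω ∂P, Filter.limsup (fun n : ℕ => (X n ω : ℝ)/n) atTop ≤ a := by
  classical
  set rmax : ℝ := 1/2 + a^2/16 with hrmax
  set θ : ℝ := 1 + a with hθdef
  set ρ : ℝ := (θ^2*rmax + 1/2)/(θ*(1 + 2/3*a^2)) with hρdef
  have hθ1 : (1:ℝ) ≤ θ := by rw [hθdef]; linarith
  have hrm : (1:ℝ)/2 ≤ rmax := by rw [hrmax]; nlinarith [sq_nonneg a]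
  have hρ0 : 0 ≤ ρ := by rw [hρdef, hθdef]; positivity
  have hρ1 : ρ < 1 := rho_lt_one a ha ha2
  set bad : ℕ → Set Ω := fun n => {ω | ((n:ℤ) + (⌈a*n⌉₊ : ℤ)) ≤ X n ω + n} with hbad
  have hbound : ∀ n, P (bad n) ≤ ENNReal.ofReal (ρ^n) := by
    intro n
    calc P (bad n)
        ≤ ENNReal.ofReal ((θ^2*rmax + 1/2)^n / θ^(n + ⌈a*n⌉₊)) :=
          bad_bound h hrm hθ1 hpb hpb0 n ⌈a*n⌉₊
      _ ≤ ENNReal.ofReal (ρ^n) := by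
          apply ENNReal.ofReal_le_ofReal
          rw [hρdef, hθdef]
          exact real_bound a ha ha2 rmax (by positivity) le_rfl n ⌈a*n⌉₊
            (Nat.le_ceil _)
  have hsum : ∑' n, P (bad n) ≠ ⊤ := by
    have hs : Summable (fun n : ℕ => ρ^n) := summable_geometric_of_lt_one hρ0 hρ1
    have hle : ∑' n, P (bad n) ≤ ENNReal.ofReal (∑' n : ℕ, ρ^n) := by
      rw [ENNReal.ofReal_tsum_of_nonneg (fun n => by positivity) hs]
      exact ENNReal.tsum_le_tsum hbound
    exact ne_top_of_le_ne_top ENNReal.ofReal_ne_top hle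
  filter_upwards [MeasureTheory.ae_eventually_notMem hsum] with ω hω
  apply Filter.limsup_le_of_le
  · -- cobounded
    apply Filter.isCoboundedUnder_le_of_le atTop (x := (-1:ℝ))
    intro n
    rcases Nat.eq_zero_or_pos n with hn | hn
    · subst hn; simp [h.init ω]
    · have habs := abs_X_le h.init h.steps ω n
      have h2 : -(n:ℤ) ≤ X n ω := by rw [abs_le] at habs; exact habs.1
      have h3 : -(n:ℝ) ≤ (X n ω : ℝ) := by exact_mod_cast h2
      have hn' : (0:ℝ) < n := by exact_mod_cast hn
      rw [le_div_iff₀ hn']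
      linarith
  · filter_upwards [hω, Filter.eventually_ge_atTop 1] with n hn hn1
    have hnot : ¬ ((n:ℤ) + (⌈a*n⌉₊ : ℤ)) ≤ X n ω + n := hn
    have h2 : X n ω < (⌈a*(n:ℕ)⌉₊ : ℤ) := by omega
    have h3 : (X n ω : ℝ) ≤ (⌈a*(n:ℕ)⌉₊ : ℝ) - 1 := by
      have : X n ω ≤ (⌈a*(n:ℕ)⌉₊ : ℤ) - 1 := by omega
      exact_mod_cast this
    have h4 : (⌈a*(n:ℕ)⌉₊ : ℝ) < a*n + 1 := Nat.ceil_lt_add_one (by positivity)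
    have hn' : (0:ℝ) < n := by exact_mod_cast hn1
    rw [div_le_iff₀ hn']
    linarith

end ERWAux

/-- **Opposite relations between `δ` and the speed.**
Let `5/6 < q < p < 1` and let `f q` be the lower bound on the speed of the 3-cookie
walk with cookie vector `(q,q,q)`; suppose that walk satisfies
`liminf Y^q n / n ≥ f q` a.s.  With `pI i = 1/2 + 3 (2p-1)/(2 (3+i))` and `Y^(i)` the
standard excited random walk with `3+i` cookies of strength `pI i`, there is an `N`
such that for all `i > N`: `δ(3,(q,q,q)) < δ(3+i, p_i)`, while almost surely
`limsup Y^(i) n / n < f q ≤ liminf Y^q n / n`. -/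
theorem delta_speed_opposite_relation
    {Ωq : Type*} [MeasurableSpace Ωq] (Pq : Measure Ωq) [IsProbabilityMeasure Pq]
    (q p : ℝ) (hq : 5 / 6 < q) (hqp : q < p) (hp : p < 1)
    (f : ℝ → ℝ)
    (hf : f = fun x => ((6 * x - 5) * (x ^ 2 - 2 * x - 1))
      / (24 * x ^ 4 - 42 * x ^ 3 - 3 * x ^ 2 + 28 * x - 9))
    (Yq : ℕ → Ωq → ℤ) (hYq : IsEARW Pq 3 (fun _ => q) (1 / 2) Yq)
    (hlb : ∀ᵐ ω ∂Pq, f q ≤ Filter.liminf (fun n : ℕ => (Yq n ω : ℝ) / n) atTop)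
    (pI : ℕ → ℝ) (hpI : ∀ i : ℕ, pI i = 1 / 2 + 3 * (2 * p - 1) / (2 * (3 + i)))
    (Ω : ℕ → Type*) [∀ i, MeasurableSpace (Ω i)]
    (P : ∀ i, Measure (Ω i)) [∀ i, IsProbabilityMeasure (P i)]
    (Y : ∀ i : ℕ, ℕ → Ω i → ℤ)
    (hY : ∀ i, IsEARW (P i) (3 + i) (fun _ => pI i) (1 / 2) (Y i)) :
    ∃ N : ℕ, ∀ i : ℕ, N < i →
      (∑ _j : Fin 3, (2 * q - 1)) < (∑ _j : Fin (3 + i), (2 * pI i - 1))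
      ∧ (∀ᵐ ω ∂P i, Filter.limsup (fun n : ℕ => (Y i n ω : ℝ) / n) atTop < f q)
      ∧ (∀ᵐ ω ∂Pq, f q ≤ Filter.liminf (fun n : ℕ => (Yq n ω : ℝ) / n) atTop) := by
  
  have hq1 : q < 1 := lt_trans hqp hp
  have hp2 : 1/2 < p := by linarith
  have hfq : 0 < f q := by
    rw [hf]
    simp only
    have hnum : (6*q - 5) * (q^2 - 2*q - 1) < 0 :=
      mul_neg_of_pos_of_neg (by linarith) (by nlinarith)
    have hden : 24*q^4 - 42*q^3 - 3*q^2 + 28*q - 9 < 0 := by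
      nlinarith [sq_nonneg (1-q), mul_pos (by linarith : (0:ℝ) < 1-q) (by linarith : (0:ℝ) < q - 5/6),
        sq_nonneg (q - 5/6), mul_pos (mul_pos (by linarith : (0:ℝ) < 1-q) (by linarith : (0:ℝ) < 1-q)) (by linarith : (0:ℝ) < 1-q)]
    exact div_pos_of_neg_of_neg hnum hden
  set a : ℝ := min (f q) 1 / 2 with ha_def
  have hmin : 0 < min (f q) 1 := lt_min hfq one_pos
  have ha : 0 < a := by rw [ha_def]; positivity
  have ha2 : a ≤ 1/2 := by
    have : min (f q) 1 ≤ 1 := min_le_right _ _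
    rw [ha_def]; linarith
  have hafq : a < f q := by
    have h1 : min (f q) 1 ≤ f q := min_le_left _ _
    rw [ha_def]; linarith
  obtain ⟨N, hN⟩ := exists_nat_gt (24*(2*p-1)/a^2)
  refine ⟨N, fun i hi => ⟨?_, ?_, hlb⟩⟩
  · -- δ comparison
    rw [Finset.sum_const, Finset.sum_const, Finset.card_univ, Finset.card_univ,
      Fintype.card_fin, Fintype.card_fin, nsmul_eq_mul, nsmul_eq_mul, hpI i]
    have h3i : (0:ℝ) < 3 + (i:ℝ) := by positivity
    push_cast
    have heq : ((3:ℝ)+(i:ℝ)) * (2*(1/2 + 3*(2*p-1)/(2*(3+(i:ℝ)))) - 1) = 3*(2*p-1) := by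
      field_simp
      ring
    calc (3:ℝ) * (2*q-1) < 3*(2*p-1) := by linarith
      _ = ((3:ℝ)+(i:ℝ)) * (2*(1/2 + 3*(2*p-1)/(2*(3+(i:ℝ)))) - 1) := heq.symm
  · -- speed comparison
    have hiN : (N:ℝ) < 3 + (i:ℝ) := by
      have : (N:ℝ) < (i:ℝ) := by exact_mod_cast hi
      linarith
    have h3i : (0:ℝ) < 3 + (i:ℝ) := by positivity
    have hkey : 24*(2*p-1) < (3+(i:ℝ)) * a^2 := by
      have h1 : 24*(2*p-1)/a^2 < 3 + (i:ℝ) := lt_trans hN hiN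
      rw [div_lt_iff₀ (by positivity)] at h1
      nlinarith
    have hple : pI i ≤ 1/2 + a^2/16 := by
      rw [hpI i]
      have h2 : 3*(2*p-1)/(2*(3+(i:ℝ))) ≤ a^2/16 := by
        rw [div_le_div_iff₀ (by positivity) (by norm_num)]
        nlinarith
      linarith
    have hpge : (1:ℝ)/2 ≤ pI i := by
      rw [hpI i]
      have : (0:ℝ) ≤ 3*(2*p-1)/(2*(3+(i:ℝ))) := div_nonneg (by linarith) (by positivity)
      linarith
    have hae := ERWAux.ae_limsup_le (hY i) ha ha2 (fun _ => hple) (fun _ => hpge)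
    filter_upwards [hae] with ω hω
    exact lt_of_le_of_lt hω hafq
end

section
/- Let p_1 ∈ (0,1), p_0 ∈ (1/2,1), and set ρ = (1−p_0)/p_0 ∈ (0,1). Let π be the stationary distribution of the backwards branching-like process associated to one cookie of strength p_1 and bias parameter p_0. Then π(0) = ∏_{k=0}^{∞} ( p_1 + (1 − p_1)·(1 − ρ^k)/(1 − ρ^{k+2}) ). -/
open MeasureTheory ProbabilityTheory Filter Topology
open scoped ENNReal NNReal

namespace BB

noncomputable def bbS (w : ℕ → ℝ) (n l : ℕ) : ℝ :=
  ∑ s ∈ Finset.univ.filter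
      (fun s : Fin n → Bool => (Finset.univ.filter fun j => s j = true).card = l),
    ∏ j : Fin n, (if s j then w (j : ℕ) else 1 - w (j : ℕ))

lemma bbTrans_eq (q : ℕ → ℝ) (l m : ℕ) : bbTrans q l m = bbS q (m + l) l * q (m + l) := rfl

lemma bbS_zero (w : ℕ → ℝ) (l : ℕ) : bbS w 0 l = if l = 0 then 1 else 0 := by
  classical
  rcases eq_or_ne l 0 with rfl | hl
  · simp [bbS]
  · simp [bbS, hl, Finset.filter_eq_empty_iff, (Ne.symm hl)]

lemma card_cons (n : ℕ) (b : Bool) (t : Fin n → Bool) :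
    (Finset.univ.filter fun j : Fin (n+1) => (Fin.cons b t : Fin (n+1) → Bool) j = true).card
      = (if b then 1 else 0) + (Finset.univ.filter fun j : Fin n => t j = true).card := by
  classical
  rw [Finset.card_filter, Finset.card_filter, Fin.sum_univ_succ]
  simp [Fin.cons_zero, Fin.cons_succ]

lemma prod_cons (w : ℕ → ℝ) (n : ℕ) (b : Bool) (t : Fin n → Bool) :
    (∏ j : Fin (n+1), (if (Fin.cons b t : Fin (n+1) → Bool) j then w (j : ℕ) else 1 - w (j : ℕ)))
      = (if b then w 0 else 1 - w 0)
        * ∏ j : Fin n, (if t j then w ((j : ℕ)+1) else 1 - w ((j : ℕ)+1)) := by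
  rw [Fin.prod_univ_succ]
  simp [Fin.cons_zero, Fin.cons_succ, Fin.val_succ]

lemma bbS_succ_aux (w : ℕ → ℝ) (n l : ℕ) :
    bbS w (n+1) l
      = w 0 * (∑ t ∈ Finset.univ.filter (fun t : Fin n → Bool =>
            1 + (Finset.univ.filter fun j => t j = true).card = l),
          ∏ j : Fin n, (if t j then w ((j:ℕ)+1) else 1 - w ((j:ℕ)+1)))
        + (1 - w 0) * (∑ t ∈ Finset.univ.filter (fun t : Fin n → Bool =>
            (Finset.univ.filter fun j => t j = true).card = l),
          ∏ j : Fin n, (if t j then w ((j:ℕ)+1) else 1 - w ((j:ℕ)+1))) := by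
  classical
  rw [bbS, Finset.sum_filter]
  rw [← (Fin.consEquiv (fun _ : Fin (n+1) => Bool)).sum_comp]
  rw [Fintype.sum_prod_type]
  rw [Fintype.sum_bool]
  simp only [Fin.consEquiv_apply]
  have key : ∀ (b : Bool) (t : Fin n → Bool),
      (if (Finset.univ.filter fun j : Fin (n+1) => (Fin.cons b t : Fin (n+1) → Bool) j = true).card = l then
          ∏ j : Fin (n+1), (if (Fin.cons b t : Fin (n+1) → Bool) j then w (j : ℕ) else 1 - w (j : ℕ)) else 0)
        = (if (if b then 1 else 0) + (Finset.univ.filter fun j : Fin n => t j = true).card = l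
            then (if b then w 0 else 1 - w 0)
              * ∏ j : Fin n, (if t j then w ((j:ℕ)+1) else 1 - w ((j:ℕ)+1)) else 0) := by
    intro b t
    rw [card_cons, prod_cons]
  simp only [key]
  rw [Finset.mul_sum, Finset.mul_sum, Finset.sum_filter, Finset.sum_filter]
  simp [Finset.mul_sum, mul_ite]

lemma bbS_succ_zero (w : ℕ → ℝ) (n : ℕ) :
    bbS w (n+1) 0 = (1 - w 0) * bbS (fun j => w (j+1)) n 0 := by
  rw [bbS_succ_aux, bbS]
  have h1 : (Finset.univ.filter (fun t : Fin n → Bool =>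
      1 + (Finset.univ.filter fun j => t j = true).card = 0)) = ∅ := by
    apply Finset.filter_eq_empty_iff.2; intro t _; omega
  rw [h1]
  simp

lemma bbS_succ_succ (w : ℕ → ℝ) (n l : ℕ) :
    bbS w (n+1) (l+1) = w 0 * bbS (fun j => w (j+1)) n l
      + (1 - w 0) * bbS (fun j => w (j+1)) n (l+1) := by
  have hfilt : (Finset.univ.filter (fun t : Fin n → Bool =>
      1 + (Finset.univ.filter fun j => t j = true).card = l+1))
      = (Finset.univ.filter (fun t : Fin n → Bool =>
      (Finset.univ.filter fun j => t j = true).card = l)) := by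
    apply Finset.filter_congr
    intro t _
    constructor <;> intro h <;> omega
  rw [bbS_succ_aux, hfilt, bbS, bbS]

lemma bbS_const (c : ℝ) (n l : ℕ) :
    bbS (fun _ => c) n l = (n.choose l : ℝ) * c ^ l * (1 - c) ^ (n - l) := by
  induction n generalizing l with
  | zero =>
    cases l with
    | zero => simp [bbS_zero]
    | succ l => simp [bbS_zero]
  | succ n ih =>
    cases l with
    | zero =>
      rw [bbS_succ_zero]
      show (1 - c) * bbS (fun _ => c) n 0 = _
      rw [ih 0]
      simp [pow_succ]
      ring
    | succ l =>
      rw [bbS_succ_succ]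
      show c * bbS (fun _ => c) n l + (1 - c) * bbS (fun _ => c) n (l+1) = _
      rw [ih l, ih (l+1)]
      rcases lt_or_ge l n with h | h
      · have h2 : n - (l+1) + 1 = n - l := by omega
        have h3 : ((n+1).choose (l+1) : ℝ) = n.choose l + n.choose (l+1) := by
          rw [Nat.choose_succ_succ]; push_cast; ring
        rw [h3, ← h2, pow_succ]
        have h4 : n + 1 - (l + 1) = n - (l+1) + 1 := by omega
        rw [h4, pow_succ]
        ring
      · rcases eq_or_lt_of_le h with rfl | h'
        · simp [Nat.choose_succ_self, Nat.choose_self, pow_succ]; ring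
        · rw [Nat.choose_eq_zero_of_lt (by omega), Nat.choose_eq_zero_of_lt (by omega),
            Nat.choose_eq_zero_of_lt (by omega)]
          simp

end BB

section Stage2
open BB

variable {p₁ p₀ : ℝ}

lemma qtail : (fun j : ℕ => (fun j : ℕ => if j = 0 then p₁ else p₀) (j+1)) = fun _ => p₀ := by
  funext j; simp

lemma bb00 : bbTrans (fun j => if j = 0 then p₁ else p₀) 0 0 = p₁ := by
  rw [bbTrans_eq, bbS_zero]; simp

lemma bb0succ (m : ℕ) :
    bbTrans (fun j => if j = 0 then p₁ else p₀) 0 (m+1) = (1 - p₁) * (1-p₀)^m * p₀ := by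
  have h : bbTrans (fun j => if j = 0 then p₁ else p₀) 0 (m+1)
      = bbS (fun j => if j = 0 then p₁ else p₀) (m+1) 0
        * (if m+1 = 0 then p₁ else p₀) := rfl
  rw [h, bbS_succ_zero, qtail, bbS_const]
  simp

lemma bbsucc (l m : ℕ) :
    bbTrans (fun j => if j = 0 then p₁ else p₀) (l+1) m
      = (p₁ * (((m+l).choose l : ℝ) * p₀^l * (1-p₀)^m)
          + (1 - p₁) * (((m+l).choose (l+1) : ℝ) * p₀^(l+1) * (1-p₀)^(m-1))) * p₀ := by
  have h : bbTrans (fun j => if j = 0 then p₁ else p₀) (l+1) m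
      = bbS (fun j => if j = 0 then p₁ else p₀) ((m+l)+1) (l+1)
        * (if (m+l)+1 = 0 then p₁ else p₀) := rfl
  rw [h, bbS_succ_succ, qtail, bbS_const, bbS_const]
  have h1 : m + l - l = m := by omega
  have h2 : m + l - (l+1) = m - 1 := by omega
  rw [h1, h2]
  simp

lemma bb_nonneg (hp₁ : p₁ ∈ Set.Ioo (0:ℝ) 1) (hp₀ : p₀ ∈ Set.Ioo (1/2 : ℝ) 1) (l m : ℕ) :
    0 ≤ bbTrans (fun j => if j = 0 then p₁ else p₀) l m := by
  obtain ⟨a1, b1⟩ := hp₁; obtain ⟨a0, b0⟩ := hp₀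
  cases l with
  | zero =>
    cases m with
    | zero => rw [bb00]; linarith
    | succ m =>
      rw [bb0succ]
      exact mul_nonneg (mul_nonneg (by linarith) (pow_nonneg (by linarith) _)) (by linarith)
  | succ l =>
    rw [bbsucc]
    have hq0 : (0:ℝ) ≤ 1 - p₀ := by linarith
    refine mul_nonneg (add_nonneg (mul_nonneg (by linarith) ?_) (mul_nonneg (by linarith) ?_)) (by linarith)
    · exact mul_nonneg (mul_nonneg (Nat.cast_nonneg _) (pow_nonneg (by linarith) _)) (pow_nonneg hq0 _)
    · exact mul_nonneg (mul_nonneg (Nat.cast_nonneg _) (pow_nonneg (by linarith) _)) (pow_nonneg hq0 _)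

variable (hp₁ : p₁ ∈ Set.Ioo (0:ℝ) 1) (hp₀ : p₀ ∈ Set.Ioo (1/2 : ℝ) 1)

lemma hasSum_row (hp₁ : p₁ ∈ Set.Ioo (0:ℝ) 1) (hp₀ : p₀ ∈ Set.Ioo (1/2 : ℝ) 1)
    {x : ℝ} (hx0 : 0 ≤ x) (hx1 : x < 1) (l : ℕ) :
    HasSum (fun m => bbTrans (fun j => if j = 0 then p₁ else p₀) l m * x^m)
      ((p₁ + (1-p₁) * x * (p₀ / (1 - (1-p₀)*x))) * (p₀ / (1 - (1-p₀)*x))^l) := by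
  obtain ⟨a1, b1⟩ := hp₁; obtain ⟨a0, b0⟩ := hp₀
  have hq0 : (0:ℝ) ≤ 1 - p₀ := by linarith
  have hr0 : 0 ≤ (1-p₀)*x := by positivity
  have hr1 : (1-p₀)*x < 1 := by nlinarith
  have hden : 0 < 1 - (1-p₀)*x := by linarith
  have hrn : ‖(1-p₀)*x‖ < 1 := by rw [Real.norm_eq_abs, abs_of_nonneg hr0]; exact hr1
  cases l with
  | zero =>
    have hgeo : HasSum (fun m : ℕ => ((1-p₁)*p₀*x) * ((1-p₀)*x)^m)
        (((1-p₁)*p₀*x) * (1 - (1-p₀)*x)⁻¹) :=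
      (hasSum_geometric_of_lt_one hr0 hr1).mul_left _
    have hshift : (fun m : ℕ => bbTrans (fun j => if j = 0 then p₁ else p₀) 0 (m+1) * x^(m+1))
        = fun m : ℕ => ((1-p₁)*p₀*x) * ((1-p₀)*x)^m := by
      funext m; rw [bb0succ]; rw [mul_pow]; ring
    have := (hasSum_nat_add_iff (f := fun m => bbTrans (fun j => if j = 0 then p₁ else p₀) 0 m * x^m) 1).1
      (by rw [hshift] at *; exact hgeo)
    simp only [Finset.range_one, Finset.sum_singleton, pow_zero, mul_one, bb00] at this
    convert this using 1
    · rfl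
    · ring
  | succ l =>
    set r := (1-p₀)*x with hr
    have hA : HasSum (fun m : ℕ => (p₁ * p₀^(l+1)) * (((m+l).choose l : ℝ) * r^m))
        ((p₁ * p₀^(l+1)) * (1 / (1-r)^(l+1))) :=
      (hasSum_choose_mul_geometric_of_norm_lt_one l hrn).mul_left _
    set F := fun m : ℕ => bbTrans (fun j => if j = 0 then p₁ else p₀) (l+1) m * x^m with hF
    set A := fun m : ℕ => (p₁ * p₀^(l+1)) * (((m+l).choose l : ℝ) * r^m) with hA'
    have hBshift : (fun m : ℕ => F (m+1) - A (m+1))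
        = fun m : ℕ => ((1-p₁) * p₀^(l+2) * x) * (((m+(l+1)).choose (l+1) : ℝ) * r^m) := by
      funext m
      have e1 : m + 1 + l = m + (l+1) := by omega
      simp only [hF, hA', bbsucc, e1]
      have e2 : m + 1 - 1 = m := by omega
      rw [e2, hr]
      rw [mul_pow, mul_pow]
      ring
    have hB : HasSum (fun m : ℕ => F m - A m)
        (((1-p₁) * p₀^(l+2) * x) * (1 / (1-r)^(l+2))) := by
      have hBs : HasSum (fun m : ℕ => (F (m+1) - A (m+1)))
          (((1-p₁) * p₀^(l+2) * x) * (1 / (1-r)^(l+2))) := by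
        rw [hBshift]
        exact (hasSum_choose_mul_geometric_of_norm_lt_one (l+1) hrn).mul_left _
      have := (hasSum_nat_add_iff (f := fun m => F m - A m) 1).1 hBs
      simp only [Finset.range_one, Finset.sum_singleton] at this
      have hF0 : F 0 - A 0 = 0 := by
        simp only [hF, hA', bbsucc]
        simp [Nat.choose_succ_self, Nat.choose_self]
        ring
      rwa [hF0, add_zero] at this
    have hsum : HasSum F
        ((p₁ * p₀^(l+1)) * (1 / (1-r)^(l+1)) + ((1-p₁) * p₀^(l+2) * x) * (1 / (1-r)^(l+2))) := by
      have := hA.add hB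
      simpa using this
    convert hsum using 1
    have h1r : (1:ℝ) - r ≠ 0 := by rw [hr]; positivity
    generalize (1:ℝ) - r = d
    ring

end Stage2

section Stage3
open BB Filter Topology

lemma phi_rec {p₁ p₀ : ℝ} (hp₁ : p₁ ∈ Set.Ioo (0:ℝ) 1) (hp₀ : p₀ ∈ Set.Ioo (1/2 : ℝ) 1)
    (π : ℕ → ℝ) (hπ : IsStationaryDist (fun j => if j = 0 then p₁ else p₀) π)
    {x : ℝ} (hx0 : 0 ≤ x) (hx1 : x < 1) :
    ∑' m, π m * x^m
      = (p₁ + (1-p₁) * x * (p₀ / (1 - (1-p₀)*x)))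
        * ∑' m, π m * (p₀ / (1 - (1-p₀)*x))^m := by
  obtain ⟨hπ0, hπ1, hπst⟩ := hπ
  have hπsum : Summable π := by
    by_contra h
    rw [tsum_eq_zero_of_not_summable h] at hπ1
    norm_num at hπ1
  obtain ⟨a1, b1⟩ := hp₁
  obtain ⟨a0, b0⟩ := hp₀
  have hden : 0 < 1 - (1-p₀)*x := by nlinarith
  set f : ℝ := p₀ / (1 - (1-p₀)*x) with hf
  set g : ℝ := p₁ + (1-p₁) * x * f with hg
  have hf0 : 0 < f := by positivity
  have hf1 : f < 1 := by
    rw [hf, div_lt_one hden]; nlinarith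
  have hxf : 0 ≤ x * f := mul_nonneg hx0 hf0.le
  have hxf1 : x * f ≤ 1 := le_trans (by nlinarith : x * f ≤ x) hx1.le
  have hg0 : 0 < g := by
    rw [hg]
    have := mul_nonneg (mul_nonneg (by linarith : (0:ℝ) ≤ 1-p₁) hx0) hf0.le
    nlinarith
  have hg1 : g ≤ 1 := by
    rw [hg]
    have h2 := mul_le_mul_of_nonneg_left hxf1 (by linarith : (0:ℝ) ≤ 1-p₁)
    nlinarith
  have hrow : ∀ l, HasSum (fun m => bbTrans (fun j => if j = 0 then p₁ else p₀) l m * x^m)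
      (g * f^l) := fun l => hasSum_row ⟨a1, b1⟩ ⟨a0, b0⟩ hx0 hx1 l
  set F : ℕ × ℕ → ℝ := fun p => π p.1 * (bbTrans (fun j => if j = 0 then p₁ else p₀) p.1 p.2 * x^p.2)
    with hF
  have hFnn : 0 ≤ F := fun p =>
    mul_nonneg (hπ0 _) (mul_nonneg (bb_nonneg ⟨a1, b1⟩ ⟨a0, b0⟩ _ _) (pow_nonneg hx0 _))
  have hFrow : ∀ l, HasSum (fun m => F (l, m)) (π l * (g * f^l)) := fun l => (hrow l).mul_left _
  have hFsummable : Summable F := by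
    rw [summable_prod_of_nonneg hFnn]
    refine ⟨fun l => (hFrow l).summable, ?_⟩
    apply Summable.congr (f := fun l => π l * (g * f^l))
    · apply Summable.of_nonneg_of_le
        (fun l => mul_nonneg (hπ0 l) (by positivity))
        (fun l => ?_) hπsum
      have : g * f^l ≤ 1 := by
        calc g * f^l ≤ 1 * 1 := by
              apply mul_le_mul hg1 (pow_le_one₀ (le_of_lt hf0) (le_of_lt hf1)) (by positivity)
              norm_num
          _ = 1 := by norm_num
      calc π l * (g * f^l) ≤ π l * 1 := by
            apply mul_le_mul_of_nonneg_left this (hπ0 l)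
        _ = π l := by ring
    · intro l
      exact ((hFrow l).tsum_eq).symm
  calc ∑' m, π m * x^m
      = ∑' m, (∑' l, π l * bbTrans (fun j => if j = 0 then p₁ else p₀) l m) * x^m := by
        apply tsum_congr; intro m; rw [← hπst m]
    _ = ∑' m, ∑' l, F (l, m) := by
        apply tsum_congr; intro m
        rw [← tsum_mul_right]
        apply tsum_congr; intro l
        simp only [hF, mul_assoc]
    _ = ∑' l, ∑' m, F (l, m) := by
        exact Summable.tsum_comm (f := fun l m => F (l, m)) hFsummable
    _ = ∑' l, π l * (g * f^l) := by
        apply tsum_congr; intro l; exact (hFrow l).tsum_eq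
    _ = g * ∑' l, π l * f^l := by
        rw [← tsum_mul_left]
        apply tsum_congr; intro l; ring

end Stage3

open BB Filter Topology in
/-- **Infinite-product formula for `π 0`.**
Let `p₁ ∈ (0,1)`, `p₀ ∈ (1/2,1)` and `ρ = (1 - p₀)/p₀ ∈ (0,1)`.  If `π` is a stationary
distribution of the backwards branching-like process associated to one cookie of
strength `p₁` and bias parameter `p₀`, then
`π 0 = ∏' k, (p₁ + (1 - p₁) (1 - ρ^k)/(1 - ρ^(k+2)))`. -/
theorem stationary_zero_mass_infinite_product
    (p₁ p₀ ρ : ℝ) (hp₁ : p₁ ∈ Set.Ioo (0 : ℝ) 1) (hp₀ : p₀ ∈ Set.Ioo (1 / 2 : ℝ) 1)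
    (hρ : ρ = (1 - p₀) / p₀)
    (π : ℕ → ℝ) (hπ : IsStationaryDist (fun j => if j = 0 then p₁ else p₀) π) :
    π 0 = ∏' k : ℕ, (p₁ + (1 - p₁) * ((1 - ρ ^ k) / (1 - ρ ^ (k + 2)))) := by
  obtain ⟨a1, b1⟩ := id hp₁
  obtain ⟨a0, b0⟩ := id hp₀
  have hp0pos : 0 < p₀ := by linarith
  have hρ0 : 0 < ρ := by rw [hρ]; apply div_pos (by linarith) hp0pos
  have hρ1 : ρ < 1 := by rw [hρ, div_lt_one hp0pos]; linarith
  have hρk1 : ∀ k : ℕ, ρ^k ≤ 1 := fun k => pow_le_one₀ hρ0.le hρ1.le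
  have hρklt : ∀ k : ℕ, 0 < k → ρ^k < 1 := fun k hk =>
    pow_lt_one₀ hρ0.le hρ1 (by omega)
  set X : ℕ → ℝ := fun k => (1 - ρ^k) / (1 - ρ^(k+1)) with hX
  have hden : ∀ k : ℕ, 0 < 1 - ρ^(k+1) := fun k => by
    have := hρklt (k+1) (by omega); linarith
  have hden2 : ∀ k : ℕ, 0 < 1 - ρ^(k+2) := fun k => by
    have := hρklt (k+2) (by omega); linarith
  have hnum : ∀ k : ℕ, 0 ≤ 1 - ρ^k := fun k => by have := hρk1 k; linarith
  have hX0 : ∀ k, 0 ≤ X k := fun k => div_nonneg (hnum k) (hden k).le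
  have hX1 : ∀ k, X k < 1 := fun k => by
    rw [hX]
    simp only
    rw [div_lt_one (hden k)]
    have : ρ^(k+1) < ρ^k := by
      calc ρ^(k+1) = ρ^k * ρ := pow_succ ρ k
        _ < ρ^k * 1 := by exact mul_lt_mul_of_pos_left hρ1 (pow_pos hρ0 k)
        _ = ρ^k := mul_one _
    linarith
  have h1ρ : 0 < 1 + ρ := by linarith
  have hp₀eq : p₀ = 1/(1+ρ) := by
    have hρp : ρ * p₀ = 1 - p₀ := by rw [hρ]; field_simp
    rw [eq_div_iff (ne_of_gt h1ρ)]
    linear_combination hρp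
  have hXstep : ∀ k, p₀ / (1 - (1-p₀) * X k) = X (k+1) := by
    intro k
    have e1 : (0:ℝ) < 1 - (1-p₀) * X k := by
      nlinarith [hX0 k, hX1 k, mul_nonneg (le_of_lt hp0pos) (hX0 k)]
    rw [div_eq_iff (ne_of_gt e1)]
    simp only [hX]
    rw [hp₀eq]
    have ne1 := (hden k).ne'
    have ne2 := (hden (k+1)).ne'
    have ne3 := h1ρ.ne'
    field_simp
    ring
  set t : ℕ → ℝ := fun k => p₁ + (1 - p₁) * ((1 - ρ ^ k) / (1 - ρ ^ (k + 2))) with ht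
  have hg : ∀ k, p₁ + (1-p₁) * X k * (p₀ / (1 - (1-p₀) * X k)) = t k := by
    intro k
    rw [hXstep k]
    have hXX : X k * X (k+1) = (1 - ρ^k) / (1 - ρ^(k+2)) := by
      simp only [hX]
      rw [div_mul_div_comm]
      rw [div_eq_div_iff (ne_of_gt (mul_pos (hden k) (hden (k+1)))) (ne_of_gt (hden2 k))]
      ring
    rw [mul_assoc, hXX, ht]
  obtain ⟨hπ0, hπ1, hπst⟩ := id hπ
  have hπsum : Summable π := by
    by_contra h
    rw [tsum_eq_zero_of_not_summable h] at hπ1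
    norm_num at hπ1
  have key : ∀ n : ℕ, ∑' m, π m * (X 0)^m
      = (∏ k ∈ Finset.range n, t k) * ∑' m, π m * (X n)^m := by
    intro n
    induction n with
    | zero => simp
    | succ n ih =>
      rw [ih]
      have h2 := phi_rec ⟨a1, b1⟩ ⟨a0, b0⟩ π hπ (hX0 n) (hX1 n)
      rw [hg n] at h2
      rw [hXstep n] at h2
      rw [h2, Finset.prod_range_succ]
      ring
  have hX00 : X 0 = 0 := by simp [hX]
  have hΦ0 : ∑' m, π m * (X 0)^m = π 0 := by
    rw [hX00]
    rw [tsum_eq_single 0 (fun m hm => by simp [zero_pow hm])]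
    simp
  have hπeq : ∀ n, π 0 = (∏ k ∈ Finset.range n, t k) * ∑' m, π m * (X n)^m := by
    intro n; rw [← hΦ0]; exact key n
  have hρpow : Tendsto (fun k : ℕ => ρ^k) atTop (𝓝 0) :=
    tendsto_pow_atTop_nhds_zero_of_lt_one hρ0.le hρ1
  have hXlim : Tendsto X atTop (𝓝 1) := by
    have h1 : Tendsto (fun k : ℕ => 1 - ρ^k) atTop (𝓝 1) := by
      simpa using tendsto_const_nhds.sub hρpow
    have h2 : Tendsto (fun k : ℕ => 1 - ρ^(k+1)) atTop (𝓝 1) := by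
      have h3 : Tendsto (fun k : ℕ => ρ^(k+1)) atTop (𝓝 0) := by
        have := hρpow.comp (tendsto_add_atTop_nat 1)
        simpa [Function.comp_def] using this
      simpa using tendsto_const_nhds.sub h3
    have := h1.div h2 one_ne_zero
    simpa [hX, Pi.div_def] using this
  have hΦlim : Tendsto (fun n => ∑' m, π m * (X n)^m) atTop (𝓝 1) := by
    have h := tendsto_tsum_of_dominated_convergence (𝓕 := atTop)
      (f := fun (n : ℕ) (m : ℕ) => π m * (X n)^m) (g := π) (bound := π) hπsum
      (fun m => by simpa using (hXlim.pow m).const_mul (π m))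
      (Filter.Eventually.of_forall (fun n => fun m => by
        rw [Real.norm_eq_abs, abs_of_nonneg (mul_nonneg (hπ0 m) (pow_nonneg (hX0 n) m))]
        calc π m * (X n)^m ≤ π m * 1 := by
              exact mul_le_mul_of_nonneg_left (pow_le_one₀ (hX0 n) (hX1 n).le) (hπ0 m)
          _ = π m := mul_one _))
    rw [hπ1] at h
    exact h
  have hev : ∀ᶠ n in atTop, (∑' m, π m * (X n)^m) ≠ 0 := hΦlim.eventually_ne one_ne_zero
  have hPlim : Tendsto (fun n => ∏ k ∈ Finset.range n, t k) atTop (𝓝 (π 0)) := by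
    have h1 : Tendsto (fun n => π 0 * (∑' m, π m * (X n)^m)⁻¹) atTop (𝓝 (π 0 * 1⁻¹)) :=
      tendsto_const_nhds.mul (hΦlim.inv₀ one_ne_zero)
    have h2 : (fun n => π 0 * (∑' m, π m * (X n)^m)⁻¹)
        =ᶠ[atTop] (fun n => ∏ k ∈ Finset.range n, t k) := by
      filter_upwards [hev] with n hn
      rw [hπeq n, mul_assoc, mul_inv_cancel₀ hn, mul_one]
    simpa using Filter.Tendsto.congr' h2 h1
  have ht_pos : ∀ k, 0 < t k := fun k => by
    rw [← hg k]
    have e1 : (0:ℝ) < 1 - (1-p₀) * X k := by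
      nlinarith [hX0 k, hX1 k, mul_nonneg (le_of_lt hp0pos) (hX0 k)]
    have : 0 ≤ (1-p₁) * X k * (p₀ / (1 - (1-p₀) * X k)) :=
      mul_nonneg (mul_nonneg (by linarith) (hX0 k)) (by positivity)
    linarith
  have ht_le1 : ∀ k, t k ≤ 1 := fun k => by
    rw [ht]
    simp only
    have hd1 : (1 - ρ^k) / (1 - ρ^(k+2)) ≤ 1 := by
      rw [div_le_one (hden2 k)]
      have : ρ^(k+2) ≤ ρ^k := pow_le_pow_of_le_one hρ0.le hρ1.le (by omega)
      linarith
    nlinarith [mul_le_mul_of_nonneg_left hd1 (by linarith : (0:ℝ) ≤ 1-p₁)]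
  have ht_ge : ∀ k, 1 - t k ≤ ((1-p₁)/(1-ρ^2)) * ρ^k := by
    intro k
    have hρ2 : (0:ℝ) < 1 - ρ^2 := by
      have := hρklt 2 (by omega); linarith
    have hb := (hden2 k).ne'
    have hq : 1 - (1-ρ^k)/(1-ρ^(k+2)) = (ρ^k - ρ^(k+2))/(1-ρ^(k+2)) := by
      field_simp
      ring
    have h1 : 1 - t k = (1-p₁) * ((ρ^k - ρ^(k+2))/(1-ρ^(k+2))) := by
      rw [ht]
      simp only
      rw [← hq]
      ring
    have h2 : (ρ^k - ρ^(k+2))/(1-ρ^(k+2)) ≤ ρ^k/(1-ρ^2) := by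
      rw [div_le_div_iff₀ (hden2 k) hρ2]
      have e2 : ρ^(k+2) = ρ^k * ρ^2 := by ring
      have e3 : 0 ≤ ρ^k * (ρ^2 * ((2 - ρ^k) - ρ^2)) :=
        mul_nonneg (pow_nonneg hρ0.le k)
          (mul_nonneg (sq_nonneg ρ) (by nlinarith [hρk1 k, hρk1 2]))
      have e4 : (ρ^k - ρ^(k+2))*(1-ρ^2) - ρ^k*(1-ρ^(k+2))
          = -(ρ^k * (ρ^2 * ((2 - ρ^k) - ρ^2))) := by rw [e2]; ring
      linarith [e3, e4]
    calc 1 - t k = (1-p₁) * ((ρ^k - ρ^(k+2))/(1-ρ^(k+2))) := h1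
      _ ≤ (1-p₁) * (ρ^k/(1-ρ^2)) := mul_le_mul_of_nonneg_left h2 (by linarith)
      _ = ((1-p₁)/(1-ρ^2)) * ρ^k := by ring
  have hρ2 : (0:ℝ) < 1 - ρ^2 := by
    have := hρklt 2 (by omega); linarith
  have hlog : ∀ k, |Real.log (t k)| ≤ ((1-p₁)/(1-ρ^2)/p₁) * ρ^k := by
    intro k
    have h0 := ht_pos k
    have h1 := ht_le1 k
    rw [abs_of_nonpos (Real.log_nonpos h0.le h1)]
    have h2 : 1 - (t k)⁻¹ ≤ Real.log (t k) := Real.one_sub_inv_le_log_of_pos h0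
    have htp : p₁ ≤ t k := by
      rw [ht]
      simp only
      have := div_nonneg (hnum k) (hden2 k).le
      nlinarith [mul_nonneg (by linarith : (0:ℝ) ≤ 1-p₁) this]
    have h4 : (t k)⁻¹ - 1 ≤ (1 - t k)/p₁ := by
      have hid : (t k)⁻¹ - 1 = (1 - t k)/(t k) := by field_simp
      rw [hid, div_le_div_iff₀ h0 a1]
      have h1t : (0:ℝ) ≤ 1 - t k := by linarith
      nlinarith [mul_le_mul_of_nonneg_left htp h1t]
    have h5 : (1 - t k)/p₁ ≤ ((1-p₁)/(1-ρ^2)/p₁) * ρ^k := by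
      have hre : ((1-p₁)/(1-ρ^2)/p₁) * ρ^k = (((1-p₁)/(1-ρ^2))*ρ^k)/p₁ := by ring
      rw [hre, div_le_div_iff_of_pos_right a1]
      exact ht_ge k
    linarith
  have hsumlog : Summable (fun k => Real.log (t k)) := by
    apply Summable.of_abs
    apply Summable.of_nonneg_of_le (fun k => abs_nonneg _) hlog
    exact (summable_geometric_of_lt_one hρ0.le hρ1).mul_left _
  have hprod : HasProd t (Real.exp (∑' k, Real.log (t k))) := by
    have h := hsumlog.hasSum.rexp
    have he : (Real.exp ∘ fun k => Real.log (t k)) = t :=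
      funext fun k => Real.exp_log (ht_pos k)
    rwa [he] at h
  have hmult : Multipliable t := ⟨_, hprod⟩
  exact tendsto_nhds_unique hPlim hmult.hasProd.tendsto_prod_nat
end
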